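/- arXiv:1101.3029 — 10 statements merged into one kernel-verified Lean document; each statement's English description precedes it below -/
import Mathlib

section
/- Let p be an odd prime, let r, s ≥ 1, and let χ be a nontrivial multiplicative character of F_{p^{rs}} of order m whose restriction to the subfield F_{p^s} is also nontrivial. Suppose there exists β ∈ F_{p^s} such that the polynomial X^r − β is irreducible over F_{p^s}, and let α ∈ F_{p^{rs}} be a root of X^r − β. Then G_{rs}(1,χ) = χ̄(r) · G_s(1,χ) · B_{r,s}(α), where B_{r,s}(α) = Σ_{z_1,…,z_{r−1} ∈ F_{p^s}} χ(1 + Σ_{i=1}^{r−1} z_i α^i), χ̄(r) is the complex conjugate of χ evaluated at the image of the integer r in the prime field, and G_s(1,χ) is the Gauss sum over F_{p^s} of the restriction of χ. -/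
open Finset Polynomial

/-- `ζ_p = exp(2πi/p)`. -/
noncomputable def zetaC (p : ℕ) : ℂ := Complex.exp (2 * (Real.pi : ℂ) * Complex.I / (p : ℂ))

/-- The Gauss sum `G_n(1,χ) = Σ_{y ∈ F} χ(y) ζ_p^{Tr(y)}` of a function `χ : F → ℂ`
over a finite field `F` of characteristic `p`, where the absolute trace to the prime
field is `Algebra.trace (ZMod p) F`. -/
noncomputable def gaussSumF (p : ℕ) (F : Type) [Field F] [Fintype F] [Algebra (ZMod p) F]
    (χ : F → ℂ) : ℂ :=
  ∑ y : F, χ y * zetaC p ^ (Algebra.trace (ZMod p) F y).val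

theorem stmt0 (p r s m : ℕ) (hp : p.Prime) (hodd : p ≠ 2) (hr : 1 ≤ r) (hs : 1 ≤ s)
    (F K : Type) [Field F] [Fintype F] [Field K] [Fintype K]
    [Algebra (ZMod p) F] [Algebra (ZMod p) K]
    (hcardF : Fintype.card F = p ^ s) (hcardK : Fintype.card K = p ^ (r * s))
    (ι : F →+* K) (χ : MulChar K ℂ)
    (hord : orderOf χ = m) (hnt : χ ≠ 1)
    (hres : ∃ y : F, y ≠ 0 ∧ χ (ι y) ≠ 1)
    (β : F) (hirr : Irreducible (Polynomial.X ^ r - Polynomial.C β))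
    (α : K) (hα : α ^ r = ι β) :
    gaussSumF p K (fun y => χ y) =
      (starRingEnd ℂ) (χ (r : K)) * gaussSumF p F (fun y => χ (ι y)) *
        ∑ z : Fin (r - 1) → F, χ (1 + ∑ i : Fin (r - 1), ι (z i) * α ^ ((i : ℕ) + 1)) := by
  classical
  haveI : Fact p.Prime := ⟨hp⟩
  letI : Algebra F K := ι.toAlgebra
  haveI : IsScalarTower (ZMod p) F K :=
    IsScalarTower.of_algebraMap_eq' (RingHom.ext_zmod _ _)
  have hι : (algebraMap F K) = ι := rfl
  have hr0 : r ≠ 0 := by omega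
  -- r is invertible in F
  have hrF : (r : F) ≠ 0 := by
    intro h
    have hsep : (X ^ r - C β : F[X]).Separable := PerfectField.separable_of_irreducible hirr
    have hder : derivative (X ^ r - C β : F[X]) = 0 := by
      simp [derivative_X_pow, h]
    rw [Polynomial.Separable, hder] at hsep
    have hu : IsUnit (X ^ r - C β : F[X]) := isCoprime_zero_right.mp hsep
    exact hirr.not_isUnit hu
  -- dimension of K over F is r
  haveI : Module.Finite F K := Module.Finite.of_finite
  have hdim : Module.finrank F K = r := by
    have h1 : Fintype.card K = Fintype.card F ^ Module.finrank F K := Module.card_eq_pow_finrank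
    rw [hcardK, hcardF, ← pow_mul] at h1
    have h2 : r * s = s * Module.finrank F K :=
      Nat.pow_right_injective hp.two_le h1
    rw [mul_comm r s] at h2
    exact (Nat.eq_of_mul_eq_mul_left (by omega) h2).symm
  -- minimal polynomial of α
  have hmin : minpoly F α = X ^ r - C β := by
    refine (minpoly.eq_of_irreducible_of_monic hirr ?_ (monic_X_pow_sub_C β hr0)).symm
    simp [hι, hα]
  have hdeg : (minpoly F α).natDegree = r := by
    rw [hmin]; exact natDegree_X_pow_sub_C
  -- basis of powers of α
  have hli : LinearIndependent F fun i : Fin r => α ^ (i : ℕ) := by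
    have h := linearIndependent_pow (K := F) α
    rwa [hdeg] at h
  haveI : Nonempty (Fin r) := ⟨⟨0, hr⟩⟩
  set b : Module.Basis (Fin r) F K :=
    basisOfLinearIndependentOfCardEqFinrank hli (by simp [hdim]) with hbdef
  have hb : ∀ i : Fin r, b i = α ^ (i : ℕ) := fun i => by
    rw [hbdef, coe_basisOfLinearIndependentOfCardEqFinrank]
  -- trace of α^k vanishes for 1 ≤ k ≤ r-1
  have htr0 : ∀ k : ℕ, 1 ≤ k → k ≤ r - 1 → Algebra.trace F K (α ^ k) = 0 := by
    intro k hk1 hk2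
    rw [Algebra.trace_eq_matrix_trace b, Matrix.trace]
    refine Finset.sum_eq_zero fun j _ => ?_
    rw [Matrix.diag_apply, Algebra.leftMulMatrix_eq_repr_mul]
    by_cases hkj : k + (j : ℕ) < r
    · have he : α ^ k * b j = b ⟨k + j, hkj⟩ := by
        rw [hb, hb, ← pow_add]
      rw [he, b.repr_self, Finsupp.single_apply, if_neg (by
        intro hcontra
        have : k + (j : ℕ) = (j : ℕ) := congrArg Fin.val hcontra
        omega)]
    · have hlt : k + (j : ℕ) - r < r := by omega
      have he : α ^ k * b j = β • b ⟨k + (j : ℕ) - r, hlt⟩ := by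
        rw [hb, hb, ← pow_add]
        have hsplit : α ^ (k + (j : ℕ)) = α ^ ((k + (j : ℕ) - r) + r) := by
          congr 1; omega
        rw [hsplit, pow_add, hα, Algebra.smul_def, hι, mul_comm]
      rw [he, map_smul, Finsupp.smul_apply, b.repr_self, Finsupp.single_apply]
      rw [if_neg (by
        intro hcontra
        have : k + (j : ℕ) - r = (j : ℕ) := congrArg Fin.val hcontra
        omega)]
      simp
  -- rename r = r' + 1
  obtain ⟨r', rfl⟩ : ∃ r', r = r' + 1 := ⟨r - 1, by omega⟩
  set u : F := ((r' + 1 : ℕ) : F) with hu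
  set B : ℂ := ∑ z : Fin r' → F, χ (1 + ∑ i : Fin r', ι (z i) * α ^ ((i : ℕ) + 1)) with hB
  -- the parametrization equivalence
  set E : (F × (Fin r' → F)) ≃ K :=
    (Fin.consEquiv fun _ : Fin (r' + 1) => F).trans b.equivFun.symm.toEquiv with hEdef
  have hE : ∀ (c₀ : F) (z : Fin r' → F),
      E (c₀, z) = ι c₀ + ∑ i : Fin r', ι (z i) * α ^ ((i : ℕ) + 1) := by
    intro c₀ z
    show b.equivFun.symm (Fin.cons c₀ z) = _
    rw [Module.Basis.equivFun_symm_apply, Fin.sum_univ_succ]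
    simp only [Fin.cons_zero, Fin.cons_succ, Fin.val_succ, Fin.val_zero, hb,
      pow_zero, Algebra.smul_def, hι, mul_one]
  -- trace computation
  have htrace : ∀ (c₀ : F) (z : Fin r' → F),
      Algebra.trace (ZMod p) K (ι c₀ + ∑ i : Fin r', ι (z i) * α ^ ((i : ℕ) + 1))
        = Algebra.trace (ZMod p) F (u * c₀) := by
    intro c₀ z
    rw [← Algebra.trace_trace (S := F)]
    congr 1
    rw [map_add, map_sum]
    have h1 : Algebra.trace F K (ι c₀) = u * c₀ := by
      rw [← hι, Algebra.trace_algebraMap, hdim, nsmul_eq_mul, hu]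
    have h2 : ∀ i : Fin r', Algebra.trace F K (ι (z i) * α ^ ((i : ℕ) + 1)) = 0 := by
      intro i
      rw [← hι, ← Algebra.smul_def, map_smul, htr0 ((i : ℕ) + 1) (by omega)
        (by have := i.isLt; omega), smul_zero]
    rw [h1, Finset.sum_congr rfl fun i _ => h2 i, Finset.sum_const, smul_zero, add_zero]
  -- inner sum over z
  have hS : ∀ c₀ : F,
      (∑ z : Fin r' → F, χ (ι c₀ + ∑ i : Fin r', ι (z i) * α ^ ((i : ℕ) + 1)))
        = χ (ι c₀) * B := by
    intro c₀
    by_cases hc : c₀ = 0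
    · subst hc
      simp only [map_zero, zero_add, MulChar.map_zero, zero_mul]
      set S : ℂ := ∑ z : Fin r' → F, χ (∑ i : Fin r', ι (z i) * α ^ ((i : ℕ) + 1)) with hSdef
      obtain ⟨y₀, hy₀, hχy₀⟩ := hres
      have hfix : χ (ι y₀) * S = S := by
        nth_rewrite 2 [hSdef]
        rw [← Equiv.sum_comp (Equiv.piCongrRight fun _ : Fin r' => Equiv.mulLeft₀ y₀ hy₀)
          (fun z : Fin r' → F => χ (∑ i : Fin r', ι (z i) * α ^ ((i : ℕ) + 1))), hSdef,
          Finset.mul_sum]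
        refine Finset.sum_congr rfl fun z _ => ?_
        rw [← map_mul, Finset.mul_sum]
        congr 1
        refine Finset.sum_congr rfl fun i _ => ?_
        simp only [Equiv.piCongrRight_apply, Equiv.mulLeft₀_apply, Pi.map_apply, map_mul,
          mul_assoc]
      have : (χ (ι y₀) - 1) * S = 0 := by rw [sub_mul, hfix, one_mul, sub_self]
      rcases mul_eq_zero.mp this with h | h
      · exact absurd (by linear_combination h : χ (ι y₀) = 1) hχy₀
      · exact h
    · calc (∑ z : Fin r' → F, χ (ι c₀ + ∑ i : Fin r', ι (z i) * α ^ ((i : ℕ) + 1)))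
          = ∑ z : Fin r' → F, χ (ι c₀ + ∑ i : Fin r', ι (c₀ * z i) * α ^ ((i : ℕ) + 1)) := by
            rw [← Equiv.sum_comp (Equiv.piCongrRight fun _ : Fin r' => Equiv.mulLeft₀ c₀ hc)
              (fun z : Fin r' → F => χ (ι c₀ + ∑ i : Fin r', ι (z i) * α ^ ((i : ℕ) + 1)))]
            exact Finset.sum_congr rfl fun z _ => rfl
        _ = ∑ z : Fin r' → F, χ (ι c₀) * χ (1 + ∑ i : Fin r', ι (z i) * α ^ ((i : ℕ) + 1)) := by
            refine Finset.sum_congr rfl fun z _ => ?_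
            rw [← map_mul]
            congr 1
            rw [mul_add, mul_one, Finset.mul_sum]
            exact congrArg _ (Finset.sum_congr rfl fun i _ => by rw [map_mul, mul_assoc])
        _ = χ (ι c₀) * B := by rw [← Finset.mul_sum, hB]
  -- the Gauss-sum shift
  have hrK : ((r' + 1 : ℕ) : K) ≠ 0 := by
    intro h
    apply hrF
    apply ι.injective
    rw [map_natCast, map_zero, h]
  have hinv : χ (ι u⁻¹) = (χ ((r' + 1 : ℕ) : K))⁻¹ := by
    refine eq_inv_of_mul_eq_one_left ?_
    rw [← map_mul, ← map_natCast ι (r' + 1), ← map_mul, inv_mul_cancel₀ hrF, map_one,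
      MulChar.map_one]
  have hshift : (∑ c₀ : F, χ (ι c₀) * zetaC p ^ (Algebra.trace (ZMod p) F (u * c₀)).val)
      = (χ ((r' + 1 : ℕ) : K))⁻¹ * gaussSumF p F (fun y => χ (ι y)) := by
    rw [← Equiv.sum_comp (Equiv.mulLeft₀ u⁻¹ (inv_ne_zero hrF))
      (fun c₀ : F => χ (ι c₀) * zetaC p ^ (Algebra.trace (ZMod p) F (u * c₀)).val)]
    rw [gaussSumF, Finset.mul_sum]
    refine Finset.sum_congr rfl fun t _ => ?_
    simp only [Equiv.mulLeft₀_apply]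
    rw [mul_inv_cancel_left₀ hrF, map_mul, map_mul, hinv, mul_assoc]
  -- final conjugation identity
  have hconj : (starRingEnd ℂ) (χ ((r' + 1 : ℕ) : K)) = (χ ((r' + 1 : ℕ) : K))⁻¹ := by
    rw [← RCLike.star_def, MulChar.star_apply', MulChar.inv_apply_eq_inv']
  -- assemble
  rw [gaussSumF, ← Equiv.sum_comp E
    (fun y : K => χ y * zetaC p ^ (Algebra.trace (ZMod p) K y).val), Fintype.sum_prod_type]
  calc (∑ c₀ : F, ∑ z : Fin r' → F,
        χ (E (c₀, z)) * zetaC p ^ (Algebra.trace (ZMod p) K (E (c₀, z))).val)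
      = ∑ c₀ : F, ∑ z : Fin r' → F,
        χ (ι c₀ + ∑ i : Fin r', ι (z i) * α ^ ((i : ℕ) + 1)) *
          zetaC p ^ (Algebra.trace (ZMod p) F (u * c₀)).val := by
        refine Finset.sum_congr rfl fun c₀ _ => Finset.sum_congr rfl fun z _ => ?_
        rw [hE, htrace]
    _ = ∑ c₀ : F, (χ (ι c₀) * B) * zetaC p ^ (Algebra.trace (ZMod p) F (u * c₀)).val := by
        refine Finset.sum_congr rfl fun c₀ _ => ?_
        rw [← Finset.sum_mul, hS]
    _ = B * ∑ c₀ : F, χ (ι c₀) * zetaC p ^ (Algebra.trace (ZMod p) F (u * c₀)).val := by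
        rw [Finset.mul_sum]; exact Finset.sum_congr rfl fun c₀ _ => by ring
    _ = (starRingEnd ℂ) (χ ((r' + 1 : ℕ) : K)) * gaussSumF p F (fun y => χ (ι y)) * B := by
        rw [hshift, hconj]; ring
end

section
/- Let p be an odd prime, s ≥ 1, and let χ be a nontrivial multiplicative character of F_{p^{2s}} whose restriction to the subfield F_{p^s} is also nontrivial. Let β ∈ F_{p^s} be such that X² − β is irreducible over F_{p^s}, and let α ∈ F_{p^{2s}} be a root of X² − β. Then G_{2s}(1,χ) = χ(α) · G_s(1,χ) · A_s(1/(2α)), where A_s(γ) = Σ_{y ∈ F_{p^s}} χ(y + γ) for γ ∈ F_{p^{2s}}, and G_s(1,χ) is the Gauss sum over F_{p^s} of the restriction of χ. -/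
open Finset

theorem stmt1 (p s : ℕ) (hp : p.Prime) (hodd : p ≠ 2) (hs : 1 ≤ s)
    (F K : Type) [Field F] [Fintype F] [Field K] [Fintype K]
    [Algebra (ZMod p) F] [Algebra (ZMod p) K]
    (hcardF : Fintype.card F = p ^ s) (hcardK : Fintype.card K = p ^ (2 * s))
    (ι : F →+* K) (χ : MulChar K ℂ)
    (hnt : χ ≠ 1)
    (hres : ∃ y : F, y ≠ 0 ∧ χ (ι y) ≠ 1)
    (β : F) (hirr : Irreducible (Polynomial.X ^ 2 - Polynomial.C β))
    (α : K) (hα : α ^ 2 = ι β) :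
    gaussSumF p K (fun y => χ y) =
      χ α * gaussSumF p F (fun y => χ (ι y)) *
        ∑ y : F, χ (ι y + (2 * α)⁻¹) := by
  classical
  haveI : Fact p.Prime := ⟨hp⟩
  haveI hchF : CharP F p := charP_of_injective_ringHom (algebraMap (ZMod p) F).injective p
  have hp2 : ¬ (p ∣ 2) := fun h => hodd ((Nat.prime_dvd_prime_iff_eq hp Nat.prime_two).mp h)
  have h2F : (2 : F) ≠ 0 := by
    intro h
    exact hp2 ((CharP.cast_eq_zero_iff F p 2).mp (by exact_mod_cast h))
  have h2K : (2 : K) ≠ 0 := by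
    intro h
    apply h2F
    apply ι.injective
    rw [map_zero, map_ofNat]
    exact h
  have hnsq : ∀ c : F, c ^ 2 ≠ β := by
    intro c hc
    have hfac : (Polynomial.X ^ 2 - Polynomial.C β : Polynomial F)
        = (Polynomial.X - Polynomial.C c) * (Polynomial.X + Polynomial.C c) := by
      rw [← hc, map_pow]; ring
    rcases hirr.isUnit_or_isUnit hfac with h | h
    · exact Polynomial.not_isUnit_of_natDegree_pos _
        (by rw [Polynomial.natDegree_X_sub_C]; norm_num) h
    · have heq : (Polynomial.X + Polynomial.C c : Polynomial F)
          = Polynomial.X - Polynomial.C (-c) := by simp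
      rw [heq] at h
      exact Polynomial.not_isUnit_of_natDegree_pos _
        (by rw [Polynomial.natDegree_X_sub_C]; norm_num) h
  have hβ : β ≠ 0 := fun h => hnsq 0 (by simp [h])
  have hα0 : α ≠ 0 := by
    intro h
    apply hβ
    apply ι.injective
    rw [← hα, h]; simp
  have hαnot : ∀ c : F, ι c ≠ α := by
    intro c h
    exact hnsq c (ι.injective (by rw [map_pow, h, hα]))
  have hinj : ∀ a b a' b' : F, ι a + ι b * α = ι a' + ι b' * α → a = a' ∧ b = b' := by
    intro a b a' b' h
    by_cases hbb : b = b'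
    · subst hbb
      exact ⟨ι.injective (add_right_cancel h), rfl⟩
    · exfalso
      apply hαnot ((a - a') / (b' - b))
      have hb0 : ι b' - ι b ≠ 0 :=
        sub_ne_zero.mpr (fun hh => hbb (ι.injective hh).symm)
      rw [map_div₀, map_sub, map_sub, div_eq_iff hb0]
      linear_combination h
  -- the bijection F × F ≃ K
  have hcard : Fintype.card (F × F) = Fintype.card K := by
    rw [Fintype.card_prod, hcardF, hcardK, two_mul, pow_add]
  have gbij : Function.Bijective (fun ab : F × F => ι ab.1 + ι ab.2 * α) := by
    rw [Fintype.bijective_iff_injective_and_card]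
    refine ⟨?_, hcard⟩
    rintro ⟨a, b⟩ ⟨a', b'⟩ h
    obtain ⟨h1, h2⟩ := hinj a b a' b' h
    simp [h1, h2]
  -- algebra structure on K over F
  letI : Algebra F K := ι.toAlgebra
  have halg : ∀ x : F, algebraMap F K x = ι x := fun _ => rfl
  haveI : IsScalarTower (ZMod p) F K :=
    IsScalarTower.of_algebraMap_eq' (RingHom.ext_zmod _ _)
  haveI : Module.Finite (ZMod p) F := Module.Finite.of_finite
  haveI : Module.Finite F K := Module.Finite.of_finite
  -- basis of K over F
  let f : (Fin 2 → F) →ₗ[F] K :=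
    { toFun := fun v => ι (v 0) + ι (v 1) * α
      map_add' := by intro v w; simp [map_add]; ring
      map_smul' := by
        intro c v
        simp only [Pi.smul_apply, smul_eq_mul, map_mul, RingHom.id_apply]
        rw [Algebra.smul_def, halg]
        ring }
  have hf : ∀ v : Fin 2 → F, f v = ι (v 0) + ι (v 1) * α := fun _ => rfl
  have hfbij : Function.Bijective f := by
    have : (f : (Fin 2 → F) → K) = (fun ab : F × F => ι ab.1 + ι ab.2 * α) ∘
        (fun v : Fin 2 → F => (v 0, v 1)) := rfl
    rw [this]
    exact gbij.comp (Equiv.bijective (piFinTwoEquiv fun _ => F))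
  let e : K ≃ₗ[F] (Fin 2 → F) := (LinearEquiv.ofBijective f hfbij).symm
  let B : Module.Basis (Fin 2) F K := Module.Basis.ofEquivFun e
  have hrepr : ∀ (v : Fin 2 → F) (i : Fin 2), B.repr (f v) i = v i := by
    intro v i
    rw [Module.Basis.ofEquivFun_repr_apply]
    show (LinearEquiv.ofBijective f hfbij).symm ((LinearEquiv.ofBijective f hfbij) v) i = v i
    rw [LinearEquiv.symm_apply_apply]
  have hB0 : B 0 = 1 := by
    rw [Module.Basis.coe_ofEquivFun]
    show f (Function.update (0 : Fin 2 → F) 0 1) = 1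
    rw [hf]
    simp
  have hB1 : B 1 = α := by
    rw [Module.Basis.coe_ofEquivFun]
    show f (Function.update (0 : Fin 2 → F) 1 1) = α
    rw [hf]
    simp
  -- trace over F
  have trF : ∀ a b : F, Algebra.trace F K (ι a + ι b * α) = 2 * a := by
    intro a b
    rw [Algebra.trace_eq_matrix_trace B, Matrix.trace_fin_two]
    rw [Algebra.leftMulMatrix_eq_repr_mul, Algebra.leftMulMatrix_eq_repr_mul, hB0, hB1]
    have e0 : (ι a + ι b * α) * 1 = f ![a, b] := by rw [hf]; simp
    have e1 : (ι a + ι b * α) * α = f ![b * β, a] := by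
      rw [hf]
      simp only [Matrix.cons_val_zero, Matrix.cons_val_one, Matrix.head_cons, map_mul]
      linear_combination ι b * hα
    rw [e0, e1, hrepr, hrepr]
    simp
    ring
  -- trace over ZMod p
  have trK : ∀ a b : F, Algebra.trace (ZMod p) K (ι a + ι b * α)
      = Algebra.trace (ZMod p) F (2 * a) := by
    intro a b
    rw [← Algebra.trace_trace (S := F), trF]
  -- sum of χ ∘ ι over F vanishes
  have sum0 : ∑ b : F, χ (ι b) = 0 := by
    obtain ⟨y0, hy0, hχ⟩ := hres
    have h1 : ∑ b : F, χ (ι (y0 * b)) = ∑ b : F, χ (ι b) :=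
      Fintype.sum_bijective _ (mulLeft_bijective₀ y0 hy0) _ _ (fun b => rfl)
    have h2 : χ (ι y0) * ∑ b : F, χ (ι b) = ∑ b : F, χ (ι b) := by
      rw [Finset.mul_sum, ← h1]
      exact Finset.sum_congr rfl fun b _ => by rw [map_mul, map_mul]
    have h3 : (χ (ι y0) - 1) * ∑ b : F, χ (ι b) = 0 := by
      rw [sub_mul, one_mul, h2, sub_self]
    rcases mul_eq_zero.mp h3 with h | h
    · exact absurd (sub_eq_zero.mp h) hχ
    · exact h
  -- key pointwise identity
  have key : ∀ a : F, (∑ b : F, χ (ι (2⁻¹ * a) + ι b * α))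
      = χ α * χ (ι a) * ∑ y : F, χ (ι y + (2 * α)⁻¹) := by
    intro a
    by_cases ha : a = 0
    · subst ha
      have hz : χ (ι (0 : F)) = 0 := by rw [map_zero, MulChar.map_zero]
      rw [hz, mul_zero (χ α), zero_mul]
      calc ∑ b : F, χ (ι (2⁻¹ * 0) + ι b * α) = ∑ b : F, χ (ι b) * χ α := by
            refine Finset.sum_congr rfl fun b _ => ?_
            rw [mul_zero, map_zero, zero_add, map_mul]
        _ = 0 := by rw [← Finset.sum_mul, sum0, zero_mul]
    · have step : ∀ y : F, χ α * χ (ι a) * χ (ι y + (2 * α)⁻¹)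
          = χ (ι (2⁻¹ * a) + ι (a * y) * α) := by
        intro y
        rw [← map_mul, ← map_mul]
        congr 1
        rw [map_mul ι, map_mul ι, map_inv₀, map_ofNat]
        field_simp
        ring
      calc ∑ b : F, χ (ι (2⁻¹ * a) + ι b * α)
          = ∑ y : F, χ (ι (2⁻¹ * a) + ι (a * y) * α) :=
            (Fintype.sum_bijective _ (mulLeft_bijective₀ a ha) _ _ (fun y => rfl)).symm
        _ = ∑ y : F, χ α * χ (ι a) * χ (ι y + (2 * α)⁻¹) :=
            Finset.sum_congr rfl fun y _ => (step y).symm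
        _ = χ α * χ (ι a) * ∑ y : F, χ (ι y + (2 * α)⁻¹) := by
            rw [← Finset.mul_sum]
  -- expand the left-hand side
  have lhs1 : gaussSumF p K (fun y => χ y)
      = ∑ ab : F × F, χ (ι ab.1 + ι ab.2 * α)
          * zetaC p ^ (Algebra.trace (ZMod p) F (2 * ab.1)).val := by
    rw [gaussSumF]
    refine (Fintype.sum_bijective _ gbij _ _ (fun ab => ?_)).symm
    rw [trK]
  rw [lhs1, Fintype.sum_prod_type]
  calc (∑ a : F, ∑ b : F, χ (ι a + ι b * α)
          * zetaC p ^ (Algebra.trace (ZMod p) F (2 * a)).val)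
      = ∑ a : F, ∑ b : F, χ (ι (2⁻¹ * a) + ι b * α)
          * zetaC p ^ (Algebra.trace (ZMod p) F (2 * (2⁻¹ * a))).val :=
        (Fintype.sum_bijective (fun a : F => 2⁻¹ * a)
          (mulLeft_bijective₀ _ (inv_ne_zero h2F)) _ _ (fun a => rfl)).symm
    _ = ∑ a : F, ∑ b : F, χ (ι (2⁻¹ * a) + ι b * α)
          * zetaC p ^ (Algebra.trace (ZMod p) F a).val := by
        refine Finset.sum_congr rfl fun a _ => ?_
        rw [show (2 : F) * (2⁻¹ * a) = a from by field_simp]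
    _ = ∑ a : F, (χ α * χ (ι a) * ∑ y : F, χ (ι y + (2 * α)⁻¹))
          * zetaC p ^ (Algebra.trace (ZMod p) F a).val := by
        refine Finset.sum_congr rfl fun a _ => ?_
        rw [← Finset.sum_mul, key a]
    _ = χ α * gaussSumF p F (fun y => χ (ι y)) * ∑ y : F, χ (ι y + (2 * α)⁻¹) := by
        rw [gaussSumF]
        simp only [Finset.mul_sum, Finset.sum_mul]
        rw [Finset.sum_comm]
        exact Finset.sum_congr rfl fun a _ => Finset.sum_congr rfl fun y _ => by ring_nf
end

section
/- Let p be an odd prime, s ≥ 1, k ≥ 1, and t = 2^k s. Let χ be a nontrivial multiplicative character of F_{p^t} whose restriction to the subfield F_{p^s} is also nontrivial. For each i = 1, …, k, let β_i ∈ F_{p^{2^{i−1}s}} be such that X² − β_i is irreducible over F_{p^{2^{i−1}s}}, and let α_i ∈ F_{p^{2^i s}} be a root of X² − β_i. Then G_t(1,χ) = G_s(1,χ) · Π_{i=1}^{k} χ(α_i) · A_{2^{i−1}s}(1/(2α_i)), where A_{2^{i−1}s}(γ) = Σ_{y ∈ F_{p^{2^{i−1}s}}} χ(y + γ), each Gauss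 sum being taken of the restriction of χ to the indicated subfield. -/
set_option maxHeartbeats 1000000
set_option synthInstance.maxHeartbeats 400000


open Finset

lemma zetaC_pow_p {p : ℕ} (hp : p ≠ 0) : zetaC p ^ p = 1 := by
  rw [zetaC, ← Complex.exp_nat_mul]
  rw [mul_div_assoc']
  rw [mul_comm (p:ℂ), mul_div_assoc, div_self (by exact_mod_cast hp), mul_one]
  exact Complex.exp_two_pi_mul_I

lemma zetaC_pow_mod {p : ℕ} (hp : p ≠ 0) (n : ℕ) : zetaC p ^ (n % p) = zetaC p ^ n := by
  conv_rhs => rw [← Nat.mod_add_div n p]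
  rw [pow_add, pow_mul, zetaC_pow_p hp, one_pow, mul_one]

lemma zetaC_val_add {p : ℕ} [NeZero p] (a b : ZMod p) :
    zetaC p ^ (a + b).val = zetaC p ^ a.val * zetaC p ^ b.val := by
  rw [← pow_add, ZMod.val_add, zetaC_pow_mod (NeZero.ne p)]

lemma sum_chi_eq_zero {K : Type} [Field K] (χ : MulChar K ℂ) (M : Subfield K) [Fintype M]
    (h : ∃ y : M, y ≠ 0 ∧ χ (y : K) ≠ 1) : ∑ y : M, χ (y : K) = 0 := by
  let χM : MulChar M ℂ :=
  { toFun := fun y => χ (y : K)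
    map_one' := by simp
    map_mul' := fun x y => by push_cast; exact map_mul χ _ _
    map_nonunit' := fun y hy => by
      have hy0 : y = 0 := by
        by_contra h0
        exact hy (isUnit_iff_ne_zero.mpr h0)
      subst hy0
      simpa using MulChar.map_zero χ }
  have hne : χM ≠ 1 := by
    obtain ⟨y, hy0, hy1⟩ := h
    intro h1
    apply hy1
    have : χM y = (1 : MulChar M ℂ) y := by rw [h1]
    rw [MulChar.one_apply (isUnit_iff_ne_zero.mpr hy0)] at this
    exact this
  exact MulChar.sum_eq_zero_of_ne_one hne

lemma nonsquare_of_irred {M : Type} [Field M] (β : M)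
    (hirr : Irreducible (Polynomial.X ^ 2 - Polynomial.C β)) : ¬ IsSquare β := by
  rintro ⟨c, hc⟩
  have hfac : (Polynomial.X ^ 2 - Polynomial.C β : Polynomial M)
      = (Polynomial.X - Polynomial.C c) * (Polynomial.X + Polynomial.C c) := by
    rw [hc, Polynomial.C_mul]
    ring
  rcases hirr.isUnit_or_isUnit hfac with h | h
  · exact (Polynomial.not_isUnit_of_degree_pos _ (by
      rw [Polynomial.degree_X_sub_C]; norm_num)) h
  · exact (Polynomial.not_isUnit_of_degree_pos _ (by
      rw [Polynomial.degree_X_add_C]; norm_num)) h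

lemma step_trace (p n : ℕ) (hp : p.Prime) (hp2 : p ≠ 2) (hn : 1 ≤ n)
    (K : Type) [Field K] [Fintype K] [Algebra (ZMod p) K]
    (M L : Subfield K) (hML : M ≤ L) [Fintype M] [Fintype L]
    [Algebra (ZMod p) M] [Algebra (ZMod p) L]
    (hcM : Fintype.card M = p ^ n) (hcL : Fintype.card L = p ^ (2 * n))
    (β : M) (hβns : ¬ IsSquare β)
    (α : K) (hαL : α ∈ L) (hα : α ^ 2 = (β : K)) (x y : M) :
    Algebra.trace (ZMod p) L
        (⟨(x : K) + (y : K) * α, L.add_mem (hML x.2) (L.mul_mem (hML y.2) hαL)⟩ : L)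
      = Algebra.trace (ZMod p) M (2 * x) := by
  haveI : Fact p.Prime := ⟨hp⟩
  haveI hcharM : CharP M p := charP_of_injective_ringHom (algebraMap (ZMod p) M).injective p
  haveI hcharL : CharP L p := charP_of_injective_ringHom (algebraMap (ZMod p) L).injective p
  haveI : ExpChar L p := ExpChar.prime hp
  letI : Algebra M L := (Subfield.inclusion hML).toAlgebra
  haveI : @IsScalarTower (ZMod p) M L Algebra.toSMul Algebra.toSMul Algebra.toSMul :=
    IsScalarTower.of_algebraMap_eq' (RingHom.ext_zmod _ _)
  -- finrank M L = 2
  have hq1 : 1 < p ^ n := Nat.one_lt_pow (by omega) hp.one_lt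
  have hfr : Module.finrank M L = 2 := by
    have h1 : Fintype.card L = Fintype.card M ^ Module.finrank M L := Module.card_eq_pow_finrank
    rw [hcM, hcL, ← pow_mul] at h1
    have h2 : 2 * n = n * Module.finrank M L := Nat.pow_right_injective hp.two_le h1
    rw [mul_comm 2 n] at h2
    exact (Nat.eq_of_mul_eq_mul_left (by omega) h2).symm
  set αL : L := (⟨α, hαL⟩ : L) with hαLdef
  -- the Frobenius power automorphism
  have hmfix : ∀ m : M, ((m : K)) ^ (p ^ n) = (m : K) := by
    intro m
    have : m ^ (p ^ n) = m := by rw [← hcM]; exact FiniteField.pow_card m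
    calc ((m : K)) ^ (p ^ n) = ((m ^ (p ^ n) : M) : K) := by push_cast; ring
    _ = (m : K) := by rw [this]
  let φ : L →ₐ[M] L :=
  { toRingHom := iterateFrobenius L p n
    commutes' := fun m => by
      apply Subtype.ext
      have h0 : ((algebraMap M L m : L) : K) = (m : K) := rfl
      calc ((iterateFrobenius L p n (algebraMap M L m) : L) : K)
          = ((algebraMap M L m : L) : K) ^ (p ^ n) := by
            rw [iterateFrobenius_def]; push_cast; ring
        _ = (m : K) := by rw [h0]; exact hmfix m }
  have hbij : Function.Bijective φ :=
    (Finite.injective_iff_bijective).mp (φ.toRingHom.injective)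
  let e : L ≃ₐ[M] L := AlgEquiv.ofBijective φ hbij
  -- e αL = -αL
  have hq_odd : Odd (p ^ n) := (hp.odd_of_ne_two hp2).pow
  obtain ⟨m, hm⟩ := hq_odd
  have hβ0 : β ≠ 0 := by
    intro h
    exact hβns ⟨0, by simp [h]⟩
  have hchar2 : ringChar M ≠ 2 := by
    rw [ringChar.eq M p]; exact hp2
  have heuler : β ^ (p ^ n / 2) = -1 := by
    rcases FiniteField.pow_dichotomy hchar2 hβ0 with h | h
    · exact absurd ((FiniteField.isSquare_iff hchar2 hβ0).mpr h) hβns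
    · rwa [hcM] at h
  have hdiv : p ^ n / 2 = m := by omega
  have hαL2 : αL ^ 2 = algebraMap M L β := by
    apply Subtype.ext
    have : ((αL ^ 2 : L) : K) = α ^ 2 := by push_cast; ring
    rw [this, hα]; rfl
  have heul' : β ^ m = -1 := by rw [← hdiv]; exact heuler
  have heαL : e αL = -αL := by
    have h1 : e αL = αL ^ (p ^ n) := rfl
    have hmapb : (algebraMap M L β) ^ m = algebraMap M L (β ^ m) :=
      (map_pow (algebraMap M L) β m).symm
    rw [h1, hm, pow_add, pow_mul, hαL2, pow_one, hmapb, heul']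
    simp
  -- trace of αL over M is zero
  have htr0 : Algebra.trace M L αL = 0 := by
    have h1 : Algebra.trace M L (e αL) = Algebra.trace M L αL :=
      Algebra.trace_eq_of_algEquiv e αL
    rw [heαL, map_neg] at h1
    have h2 : (2 : M) * Algebra.trace M L αL = 0 := by linear_combination -h1
    have h2ne : (2 : M) ≠ 0 := by
      intro h
      have : ((2 : ℕ) : M) = 0 := by exact_mod_cast h
      have := (CharP.cast_eq_zero_iff M p 2).mp this
      rcases (Nat.prime_dvd_prime_iff_eq hp Nat.prime_two).mp this with h'
      exact hp2 h'
    exact (mul_eq_zero.mp h2).resolve_left h2ne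
  -- the element as an M-combination
  have hz : (⟨(x : K) + (y : K) * α, L.add_mem (hML x.2) (L.mul_mem (hML y.2) hαL)⟩ : L)
      = algebraMap M L x + algebraMap M L y * αL := by
    apply Subtype.ext
    push_cast
    rfl
  rw [← Algebra.trace_trace (S := M) (T := L), hz]
  rw [map_add]
  have h3 : algebraMap M L y * αL = y • αL := (Algebra.smul_def y αL).symm
  rw [h3, LinearMap.map_smul, htr0, smul_zero, add_zero, Algebra.trace_algebraMap, hfr]
  rw [two_smul, two_mul, map_add]

lemma step (p n : ℕ) (hp : p.Prime) (hp2 : p ≠ 2) (hn : 1 ≤ n)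
    (K : Type) [Field K] [Fintype K] [Algebra (ZMod p) K]
    (M L : Subfield K) (hML : M ≤ L) [Fintype M] [Fintype L]
    [Algebra (ZMod p) M] [Algebra (ZMod p) L]
    (hcM : Fintype.card M = p ^ n) (hcL : Fintype.card L = p ^ (2 * n))
    (χ : MulChar K ℂ)
    (hχM : ∃ y : M, y ≠ 0 ∧ χ (y : K) ≠ 1)
    (β : M) (hirr : Irreducible (Polynomial.X ^ 2 - Polynomial.C β))
    (α : K) (hαL : α ∈ L) (hα : α ^ 2 = (β : K)) :
    gaussSumF p L (fun y => χ (y : K)) =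
      gaussSumF p M (fun y => χ (y : K)) * (χ α * ∑ y : M, χ ((y : K) + (2 * α)⁻¹)) := by
  classical
  haveI : Fact p.Prime := ⟨hp⟩
  haveI : NeZero p := ⟨hp.ne_zero⟩
  haveI hcharM : CharP M p := charP_of_injective_ringHom (algebraMap (ZMod p) M).injective p
  haveI hcharK : CharP K p := charP_of_injective_ringHom (algebraMap (ZMod p) K).injective p
  have hβns : ¬ IsSquare β := nonsquare_of_irred β hirr
  have hβ0 : β ≠ 0 := fun h => hβns ⟨0, by simp [h]⟩
  have hα0 : α ≠ 0 := by
    intro h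
    apply hβ0
    have h1 : (β : K) = 0 := by rw [← hα, h]; ring
    exact_mod_cast h1
  have h2M : (2 : M) ≠ 0 := by
    intro h
    have h1 : ((2 : ℕ) : M) = 0 := by exact_mod_cast h
    have h2 := (CharP.cast_eq_zero_iff M p 2).mp h1
    exact hp2 ((Nat.prime_dvd_prime_iff_eq hp Nat.prime_two).mp h2)
  have h2K : (2 : K) ≠ 0 := by
    intro h
    apply h2M
    have : ((2:M):K) = 0 := by push_cast; exact h
    exact_mod_cast this
  have h2cast : ((2 : M) : K) = (2 : K) := by
    have h1 : (2 : M) = 1 + 1 := by norm_num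
    rw [h1]
    push_cast
    norm_num
  -- notation
  set G : ℂ := gaussSumF p M (fun y => χ (y : K)) with hG
  set ψ : M → ℂ := fun w => zetaC p ^ (Algebra.trace (ZMod p) M w).val with hψ
  have hψ0 : ψ 0 = 1 := by simp [hψ]
  have hscale : ∀ c : M, c ≠ 0 →
      ∑ w : M, χ (w : K) * ψ (c * w) = χ ((c : K)⁻¹) * G := by
    intro c hc
    have h := Fintype.sum_bijective (fun w : M => c⁻¹ * w)
        (mulLeft_bijective₀ _ (inv_ne_zero hc))
        (fun w : M => χ ((c : K)⁻¹) * (χ (w : K) * ψ w))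
        (fun w : M => χ (w : K) * ψ (c * w))
        (fun w => by
          show χ ((c : K)⁻¹) * (χ (w : K) * ψ w)
              = χ ((c⁻¹ * w : M) : K) * ψ (c * (c⁻¹ * w))
          rw [mul_inv_cancel_left₀ hc]
          have h1 : ((c⁻¹ * w : M) : K) = (c : K)⁻¹ * (w : K) := by push_cast; ring
          rw [h1, map_mul]
          ring)
    rw [← h, ← Finset.mul_sum]
    congr 1
  have hsum0 : ∑ w : M, χ (w : K) = 0 := sum_chi_eq_zero χ M hχM
  have hT : ∀ u : M, ∑ w : M, χ (w : K) * ψ ((2 * u) * w) =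
      if u = 0 then 0 else χ (((2 * u : M) : K)⁻¹) * G := by
    intro u
    by_cases hu : u = 0
    · rw [if_pos hu, hu]
      have h1 : ∀ w : M, χ (w : K) * ψ ((2 * (0:M)) * w) = χ (w : K) := by
        intro w
        rw [mul_zero, zero_mul, hψ0, mul_one]
      rw [Finset.sum_congr rfl (fun w _ => h1 w), hsum0]
    · rw [if_neg hu]
      exact hscale (2 * u) (mul_ne_zero h2M hu)
  -- the bijection (y, x) ↦ x + y α between M × M and L
  set g : M × M → L := fun z =>
    (⟨(z.2 : K) + (z.1 : K) * α, L.add_mem (hML z.2.2) (L.mul_mem (hML z.1.2) hαL)⟩ : L)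
    with hg
  have hginj : Function.Injective g := by
    rintro ⟨y1, x1⟩ ⟨y2, x2⟩ h
    have h' : (x1 : K) + (y1 : K) * α = (x2 : K) + (y2 : K) * α := congrArg Subtype.val h
    by_cases hy : y1 = y2
    · subst hy
      have hx : (x1 : K) = (x2 : K) := by
        have := add_right_cancel h'
        exact this
      have : x1 = x2 := by exact_mod_cast hx
      simp [this]
    · exfalso
      apply hβns
      have hyne : (y2 : K) - (y1 : K) ≠ 0 := by
        intro h0
        exact hy (by exact_mod_cast (sub_eq_zero.mp h0).symm)
      have hαeq : α = ((x1 : K) - (x2 : K)) / ((y2 : K) - (y1 : K)) := by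
        rw [eq_div_iff hyne]
        linear_combination -h'
      have hy2 : y2 - y1 ≠ 0 := by
        intro h0
        apply hyne
        have : ((y2 - y1 : M) : K) = 0 := by rw [h0]; simp
        push_cast at this
        exact this
      refine ⟨(x1 - x2) / (y2 - y1), ?_⟩
      have hc : (((x1 - x2) / (y2 - y1) : M) : K) = ((x1 : K) - (x2 : K)) / ((y2 : K) - (y1 : K)) := by
        push_cast
        ring
      have hβc : (β : K) = (((x1 - x2) / (y2 - y1) : M) : K) * (((x1 - x2) / (y2 - y1) : M) : K) := by
        rw [hc, ← hαeq, ← hα]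
        ring
      exact_mod_cast hβc
  have hcardeq : Fintype.card (M × M) = Fintype.card L := by
    rw [Fintype.card_prod, hcM, hcL, ← pow_add, two_mul]
  have hgbij : Function.Bijective g :=
    (Fintype.bijective_iff_injective_and_card g).mpr ⟨hginj, hcardeq⟩
  have hexpand : gaussSumF p L (fun y => χ (y : K)) =
      ∑ y : M, ∑ x : M, χ ((x : K) + (y : K) * α) * ψ (2 * x) := by
    have h := Fintype.sum_bijective g hgbij
      (fun z : M × M => χ ((z.2 : K) + (z.1 : K) * α) * ψ (2 * z.2))
      (fun w : L => χ (w : K) * zetaC p ^ (Algebra.trace (ZMod p) L w).val)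
      (fun z => by
        have htr := step_trace p n hp hp2 hn K M L hML hcM hcL β hβns α hαL hα z.2 z.1
        show χ ((z.2 : K) + (z.1 : K) * α) * zetaC p ^ (Algebra.trace (ZMod p) M (2 * z.2)).val
            = _
        rw [← htr])
    rw [gaussSumF, ← h, Fintype.sum_prod_type]
  rw [hexpand, ← Finset.add_sum_erase univ _ (Finset.mem_univ (0 : M))]
  -- the y = 0 part
  have hS0 : ∑ x : M, χ ((x : K) + ((0 : M) : K) * α) * ψ (2 * x) = χ (((2:M) : K)⁻¹) * G := by
    have h1 : ∀ x : M, χ ((x : K) + ((0 : M) : K) * α) * ψ (2 * x)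
        = χ (x : K) * ψ (2 * x) := by
      intro x
      norm_num
    rw [Finset.sum_congr rfl (fun x _ => h1 x)]
    exact hscale 2 h2M
  -- the y ≠ 0 part
  have hSy : ∀ y ∈ univ.erase (0 : M),
      (∑ x : M, χ ((x : K) + (y : K) * α) * ψ (2 * x))
        = ∑ u : M, (χ (y : K) * χ ((u : K) + α)) * ψ (2 * (y * u)) := by
    intro y hy
    have hy0 : y ≠ 0 := (Finset.mem_erase.mp hy).1
    exact (Fintype.sum_bijective (fun u : M => y * u) (mulLeft_bijective₀ y hy0)
      (fun u : M => (χ (y : K) * χ ((u : K) + α)) * ψ (2 * (y * u)))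
      (fun x : M => χ ((x : K) + (y : K) * α) * ψ (2 * x))
      (fun u => by
        show (χ (y : K) * χ ((u : K) + α)) * ψ (2 * (y * u))
            = χ (((y * u : M) : K) + (y : K) * α) * ψ (2 * (y * u))
        have h1 : ((y * u : M) : K) + (y : K) * α = (y : K) * ((u : K) + α) := by
          push_cast; ring
        rw [h1, map_mul])).symm
  rw [Finset.sum_congr rfl hSy]
  have hswap : ∑ y ∈ univ.erase (0 : M), ∑ u : M, (χ (y : K) * χ ((u : K) + α)) * ψ (2 * (y * u))
      = ∑ u : M, χ ((u : K) + α) * ∑ y ∈ univ.erase (0 : M), χ (y : K) * ψ ((2 * u) * y) := by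
    rw [Finset.sum_comm]
    apply Finset.sum_congr rfl
    intro u _
    rw [Finset.mul_sum]
    apply Finset.sum_congr rfl
    intro y _
    have h1 : 2 * (y * u) = (2 * u) * y := by ring
    rw [h1]
    ring
  rw [hswap]
  have hinner : ∀ u : M, χ ((u : K) + α) * ∑ y ∈ univ.erase (0 : M), χ (y : K) * ψ ((2 * u) * y)
      = χ ((u : K) + α) * (if u = 0 then 0 else χ (((2 * u : M) : K)⁻¹) * G) := by
    intro u
    congr 1
    rw [Finset.sum_erase _ (by
      show χ (((0:M) : K)) * ψ ((2 * u) * 0) = 0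
      have : (((0:M)) : K) = (0 : K) := by push_cast; rfl
      rw [this, MulChar.map_zero, zero_mul])]
    exact hT u
  rw [Finset.sum_congr rfl (fun u _ => hinner u)]
  have herase : ∑ u : M, χ ((u : K) + α) * (if u = 0 then 0 else χ (((2 * u : M) : K)⁻¹) * G)
      = ∑ u ∈ univ.erase (0 : M), χ ((u : K) + α) * (χ (((2 * u : M) : K)⁻¹) * G) := by
    rw [← Finset.sum_erase univ (f := fun u : M =>
        χ ((u : K) + α) * (if u = 0 then 0 else χ (((2 * u : M) : K)⁻¹) * G))
      (by
        show χ (((0:M) : K) + α) * (if (0:M) = 0 then 0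
          else χ (((2 * (0:M) : M) : K)⁻¹) * G) = 0
        rw [if_pos rfl, mul_zero])]
    apply Finset.sum_congr rfl
    intro u hu
    rw [if_neg (Finset.mem_erase.mp hu).1]
  rw [herase, hS0]
  -- now handle the right-hand side
  have hRHS : χ α * ∑ v : M, χ ((v : K) + (2 * α)⁻¹)
      = χ (((2:M) : K)⁻¹) + ∑ u ∈ univ.erase (0 : M), χ ((u : K) + α) * χ (((2 * u : M) : K)⁻¹) := by
    rw [Finset.mul_sum]
    have hterm : ∀ v : M, χ α * χ ((v : K) + (2 * α)⁻¹) = χ (α * (v : K) + (2 : K)⁻¹) := by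
      intro v
      rw [← map_mul]
      congr 1
      field_simp
    rw [Finset.sum_congr rfl (fun v _ => hterm v),
      ← Finset.add_sum_erase univ _ (Finset.mem_univ (0 : M))]
    congr 1
    · have h1 : α * (((0:M)) : K) + (2 : K)⁻¹ = ((2:M) : K)⁻¹ := by
        rw [h2cast]
        push_cast
        ring
      rw [h1]
    · refine Finset.sum_nbij' (i := fun v : M => (2 * v)⁻¹) (j := fun u : M => (2 * u)⁻¹)
        ?_ ?_ ?_ ?_ ?_
      · intro v hv
        have hv0 : v ≠ 0 := (Finset.mem_erase.mp hv).1
        exact Finset.mem_erase.mpr ⟨inv_ne_zero (mul_ne_zero h2M hv0), Finset.mem_univ _⟩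
      · intro u hu
        have hu0 : u ≠ 0 := (Finset.mem_erase.mp hu).1
        exact Finset.mem_erase.mpr ⟨inv_ne_zero (mul_ne_zero h2M hu0), Finset.mem_univ _⟩
      · intro v hv
        have hv0 : v ≠ 0 := (Finset.mem_erase.mp hv).1
        show (2 * (2 * v)⁻¹)⁻¹ = v
        have h1 : (2 : M) * (2 * v)⁻¹ = v⁻¹ := by
          rw [mul_inv, ← mul_assoc, mul_inv_cancel₀ h2M, one_mul]
        rw [h1, inv_inv]
      · intro u hu
        have hu0 : u ≠ 0 := (Finset.mem_erase.mp hu).1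
        show (2 * (2 * u)⁻¹)⁻¹ = u
        have h1 : (2 : M) * (2 * u)⁻¹ = u⁻¹ := by
          rw [mul_inv, ← mul_assoc, mul_inv_cancel₀ h2M, one_mul]
        rw [h1, inv_inv]
      · intro v hv
        have hv0 : v ≠ 0 := (Finset.mem_erase.mp hv).1
        have hv0K : (v : K) ≠ 0 := by
          intro h0
          exact hv0 (by exact_mod_cast h0)
        rw [← map_mul]
        congr 1
        have h1 : (((2 * (2 * v)⁻¹ : M)) : K) = 2 * (2 * (v:K))⁻¹ := by push_cast [h2cast]; ring
        have h2 : ((((2 * v)⁻¹ : M)) : K) = (2 * (v:K))⁻¹ := by push_cast [h2cast]; ring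
        rw [h1, h2]
        field_simp
        ring
  rw [hRHS]
  rw [mul_add, Finset.mul_sum]
  congr 1
  · ring
  · apply Finset.sum_congr rfl
    intro u _
    ring

theorem stmt2 (p s k : ℕ) (hp : p.Prime) (hodd : p ≠ 2) (hs : 1 ≤ s) (hk : 1 ≤ k)
    (K : Type) [Field K] [Fintype K] [Algebra (ZMod p) K]
    (hcardK : Fintype.card K = p ^ (2 ^ k * s))
    -- the tower `F_{p^s} = E 0 ⊆ E 1 ⊆ ⋯ ⊆ E k = F_{p^t}` of subfields of `K`
    (E : Fin (k + 1) → Subfield K)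
    [∀ i, Fintype (E i)] [∀ i, Algebra (ZMod p) (E i)]
    (hcardE : ∀ i : Fin (k + 1), Fintype.card (E i) = p ^ (2 ^ (i : ℕ) * s))
    (htop : E (Fin.last k) = ⊤)
    (hmono : ∀ i : Fin k, E i.castSucc ≤ E i.succ)
    (χ : MulChar K ℂ) (hnt : χ ≠ 1)
    (hres : ∃ y : E 0, y ≠ 0 ∧ χ (y : K) ≠ 1)
    (β : ∀ i : Fin k, E i.castSucc)
    (hirr : ∀ i : Fin k, Irreducible (Polynomial.X ^ 2 - Polynomial.C (β i)))
    (α : Fin k → K)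
    (hαmem : ∀ i : Fin k, α i ∈ E i.succ)
    (hα : ∀ i : Fin k, (α i) ^ 2 = ((β i : E i.castSucc) : K)) :
    gaussSumF p K (fun y => χ y) =
      gaussSumF p (E 0) (fun y => χ (y : K)) *
        ∏ i : Fin k, (χ (α i) * ∑ y : E i.castSucc, χ ((y : K) + (2 * α i)⁻¹)) := by
  classical
  haveI : Fact p.Prime := ⟨hp⟩
  -- the tower is increasing from `E 0`
  have hEchain : ∀ m : ℕ, ∀ hm : m < k + 1, E 0 ≤ E ⟨m, hm⟩ := by
    intro m
    induction m with
    | zero =>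
      intro hm
      have h0 : (⟨0, hm⟩ : Fin (k + 1)) = 0 := by ext; simp
      rw [h0]
    | succ m ih =>
      intro hm
      have hmk1 : m < k + 1 := by omega
      have hmk : m < k := by omega
      have h1 : E ⟨m, hmk1⟩ ≤ E ⟨m + 1, hm⟩ := by
        have h2 := hmono ⟨m, hmk⟩
        have hc : (⟨m, hmk⟩ : Fin k).castSucc = ⟨m, hmk1⟩ := rfl
        have hsx : (⟨m, hmk⟩ : Fin k).succ = ⟨m + 1, hm⟩ := rfl
        rw [hc, hsx] at h2
        exact h2
      exact le_trans (ih hmk1) h1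
  set f : ℕ → ℂ := fun j => if h : j < k then
      χ (α ⟨j, h⟩) * ∑ y : E (⟨j, h⟩ : Fin k).castSucc, χ ((y : K) + (2 * α ⟨j, h⟩)⁻¹)
    else 1 with hf
  have main : ∀ m : ℕ, ∀ hm : m < k + 1,
      gaussSumF p (E ⟨m, hm⟩) (fun y => χ (y : K)) =
        gaussSumF p (E 0) (fun y => χ (y : K)) * ∏ j ∈ Finset.range m, f j := by
    intro m
    induction m with
    | zero =>
      intro hm
      rw [Finset.range_zero, Finset.prod_empty, mul_one]
      have h0 : (⟨0, hm⟩ : Fin (k + 1)) = 0 := by ext; simp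
      rw [h0]
    | succ m ih =>
      intro hm
      have hmk : m < k := by omega
      have hmk1 : m < k + 1 := by omega
      set i : Fin k := ⟨m, hmk⟩ with hi
      have hcast : i.castSucc = (⟨m, hmk1⟩ : Fin (k + 1)) := rfl
      have hsucc : i.succ = (⟨m + 1, hm⟩ : Fin (k + 1)) := rfl
      have hcM : Fintype.card (E i.castSucc) = p ^ (2 ^ m * s) := by
        have h1 := hcardE i.castSucc
        simpa using h1
      have hcL : Fintype.card (E i.succ) = p ^ (2 * (2 ^ m * s)) := by
        have h1 := hcardE i.succ
        have h2 : ((i.succ : Fin (k + 1)) : ℕ) = m + 1 := rfl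
        rw [h2] at h1
        rw [h1]
        congr 1
        ring
      have hχM : ∃ y : E i.castSucc, y ≠ 0 ∧ χ (y : K) ≠ 1 := by
        obtain ⟨y, hy0, hy1⟩ := hres
        refine ⟨⟨(y : K), (hcast ▸ hEchain m hmk1) y.2⟩, ?_, hy1⟩
        intro h0
        apply hy0
        have : (y : K) = 0 := congrArg Subtype.val h0
        exact_mod_cast this
      have hstep := step p (2 ^ m * s) hp hodd
        (Nat.mul_pos (Nat.pow_pos (by omega : 0 < 2)) hs)
        K (E i.castSucc) (E i.succ) (hmono i) hcM hcL χ hχM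
        (β i) (hirr i) (α i) (hαmem i) (hα i)
      have hfm : f m = χ (α i) * ∑ y : E i.castSucc, χ ((y : K) + (2 * α i)⁻¹) := by
        simp only [hf]
        rw [dif_pos hmk]
      calc gaussSumF p (E ⟨m + 1, hm⟩) (fun y => χ (y : K))
          = gaussSumF p (E i.succ) (fun y => χ (y : K)) := by rw [hsucc]
        _ = gaussSumF p (E i.castSucc) (fun y => χ (y : K))
              * (χ (α i) * ∑ y : E i.castSucc, χ ((y : K) + (2 * α i)⁻¹)) := hstep
        _ = (gaussSumF p (E 0) (fun y => χ (y : K)) * ∏ j ∈ Finset.range m, f j)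
              * (χ (α i) * ∑ y : E i.castSucc, χ ((y : K) + (2 * α i)⁻¹)) := by
            rw [hcast, ih hmk1]
        _ = gaussSumF p (E 0) (fun y => χ (y : K)) * ∏ j ∈ Finset.range (m + 1), f j := by
            rw [Finset.prod_range_succ, hfm, mul_assoc]
  -- transfer the Gauss sum over K to the top of the tower
  have htopEq : gaussSumF p K (fun y => χ y)
      = gaussSumF p (E (Fin.last k)) (fun y => χ (y : K)) := by
    set e : (E (Fin.last k)) ≃+* K := (RingEquiv.subfieldCongr htop).trans Subfield.topEquiv
      with he
    have hecoe : ∀ y : E (Fin.last k), (e y : K) = (y : K) := fun y => rfl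
    let eA : (E (Fin.last k)) ≃ₐ[ZMod p] K :=
    { e with
      commutes' := fun r => RingHom.congr_fun
        (RingHom.ext_zmod (e.toRingHom.comp (algebraMap (ZMod p) (E (Fin.last k))))
          (algebraMap (ZMod p) K)) r }
    have h := Fintype.sum_bijective (⇑eA) (EquivLike.bijective eA)
      (fun y : E (Fin.last k) => χ (y : K) * zetaC p ^ (Algebra.trace (ZMod p) (E (Fin.last k)) y).val)
      (fun z : K => χ z * zetaC p ^ (Algebra.trace (ZMod p) K z).val)
      (fun y => by
        show χ (y : K) * zetaC p ^ (Algebra.trace (ZMod p) (E (Fin.last k)) y).val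
            = χ (eA y) * zetaC p ^ (Algebra.trace (ZMod p) K (eA y)).val
        rw [Algebra.trace_eq_of_algEquiv eA y]
        rfl)
    rw [gaussSumF, gaussSumF, ← h]
  rw [htopEq]
  have hlast : Fin.last k = (⟨k, by omega⟩ : Fin (k + 1)) := rfl
  rw [hlast, main k (by omega)]
  congr 1
  rw [← Fin.prod_univ_eq_prod_range f k]
  apply Finset.prod_congr rfl
  intro i _
  have h1 : f (i : ℕ) = χ (α ⟨(i : ℕ), i.isLt⟩) *
      ∑ y : E (⟨(i : ℕ), i.isLt⟩ : Fin k).castSucc,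
        χ ((y : K) + (2 * α ⟨(i : ℕ), i.isLt⟩)⁻¹) := by
    simp only [hf]
    rw [dif_pos i.isLt]
  rw [h1]
end

section
/- Let p be a prime and m an odd positive integer with p ≡ −1 (mod m). Let s ≥ 1 and let χ be a multiplicative character of F_{p^s} of order m. Then the Gauss sum G_s(1,χ) is a real number, i.e. its complex conjugate equals itself. -/
open Finset

theorem stmt3 (p m s : ℕ) (hp : p.Prime) (hm : Odd m) (hpm : (p : ZMod m) = -1)
    (hs : 1 ≤ s)
    (F : Type) [Field F] [Fintype F] [Algebra (ZMod p) F]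
    (hcard : Fintype.card F = p ^ s)
    (χ : MulChar F ℂ) (hord : orderOf χ = m) :
    (starRingEnd ℂ) (gaussSumF p F (fun y => χ y)) = gaussSumF p F (fun y => χ y) := by
  haveI : Fact p.Prime := ⟨hp⟩
  haveI : CharP F p := charP_of_injective_ringHom (algebraMap (ZMod p) F).injective p
  have hp0 : (p : ℂ) ≠ 0 := Nat.cast_ne_zero.mpr hp.ne_zero
  have hζp : zetaC p ^ p = 1 := by
    have hc : ((p : ℕ) : ℂ) * (2 * (Real.pi : ℂ) * Complex.I / (p : ℂ)) =
        2 * (Real.pi : ℂ) * Complex.I := by field_simp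
    rw [zetaC, ← Complex.exp_nat_mul, hc]
    simpa using Complex.exp_int_mul_two_pi_mul_I 1
  have hζne : zetaC p ≠ 0 := Complex.exp_ne_zero _
  have hmod : ∀ k : ℕ, zetaC p ^ (k % p) = zetaC p ^ k := by
    intro k
    conv_rhs => rw [← Nat.div_add_mod k p]
    rw [pow_add, pow_mul, hζp, one_pow, one_mul]
  have hadd : ∀ a b : ZMod p, zetaC p ^ (a + b).val = zetaC p ^ a.val * zetaC p ^ b.val := by
    intro a b
    rw [ZMod.val_add, hmod, pow_add]
  have hneg : ∀ a : ZMod p, zetaC p ^ (-a).val = (zetaC p ^ a.val)⁻¹ := by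
    intro a
    refine eq_inv_of_mul_eq_one_left ?_
    rw [← hadd, neg_add_cancel]
    simp [ZMod.val_zero]
  have hconjζ : (starRingEnd ℂ) (zetaC p) = (zetaC p)⁻¹ := by
    rw [zetaC, ← Complex.exp_conj, ← Complex.exp_neg]
    congr 1
    simp only [map_div₀, map_mul, Complex.conj_I, map_ofNat, Complex.conj_ofReal,
      map_natCast]
    ring
  -- χ^m = 1
  have hm0 : m ≠ 0 := by rintro rfl; exact (Nat.not_odd_iff_even.mpr Even.zero) hm
  have hχm : χ ^ m = 1 := by rw [← hord]; exact pow_orderOf_eq_one χ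
  -- m ∣ p + 1, so χ^p = χ⁻¹
  have hdvd : m ∣ p + 1 := by
    have : ((p + 1 : ℕ) : ZMod m) = 0 := by push_cast [hpm]; ring
    exact (ZMod.natCast_eq_zero_iff _ _).mp this
  have hχp : χ ^ p = χ⁻¹ := by
    refine eq_inv_of_mul_eq_one_left ?_
    have : χ ^ (p + 1) = 1 := orderOf_dvd_iff_pow_eq_one.mp (hord ▸ hdvd)
    rwa [pow_succ] at this
  -- χ(-1) = 1
  have hχneg1 : χ (-1) = 1 := by
    obtain ⟨k, hk⟩ := hm
    have h2 : χ (-1) ^ 2 = 1 := by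
      rw [← map_pow]; norm_num
    have hχm1 : χ (-1) ^ m = 1 := by
      rw [← MulChar.pow_apply' χ hm0, hχm, MulChar.one_apply (isUnit_one.neg)]
    rwa [hk, pow_add, pow_mul, h2, one_pow, pow_one, one_mul] at hχm1
  -- Frobenius as algebra equiv
  have hfrobinj : Function.Injective (frobenius F p) := (frobenius F p).injective
  have hfrobbij : Function.Bijective (frobenius F p) :=
    (Finite.injective_iff_bijective).mp hfrobinj
  let fa : F →ₐ[ZMod p] F :=
    { toRingHom := frobenius F p,
      commutes' := fun r => by
        show frobenius F p (algebraMap (ZMod p) F r) = algebraMap (ZMod p) F r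
        rw [frobenius_def, ← map_pow, ZMod.pow_card] }
  let e : F ≃ₐ[ZMod p] F := AlgEquiv.ofBijective fa hfrobbij
  have htr : ∀ y : F, Algebra.trace (ZMod p) F (y ^ p) = Algebra.trace (ZMod p) F y := by
    intro y
    have he : e y = y ^ p := rfl
    have := Algebra.trace_eq_of_algEquiv e y
    rwa [he] at this
  -- Gauss sum of χ⁻¹ equals Gauss sum of χ
  have hGinv : gaussSumF p F (fun y => χ⁻¹ y) = gaussSumF p F (fun y => χ y) := by
    unfold gaussSumF
    rw [← Function.Bijective.sum_comp hfrobbij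
      (fun y => χ⁻¹ y * zetaC p ^ (Algebra.trace (ZMod p) F y).val)]
    refine Finset.sum_congr rfl fun z _ => ?_
    simp only [frobenius_def, htr]
    congr 1
    rw [map_pow, ← MulChar.pow_apply' χ⁻¹ hp.ne_zero, inv_pow, hχp, inv_inv]
  -- main computation
  calc
    (starRingEnd ℂ) (gaussSumF p F (fun y => χ y))
        = ∑ y : F, χ⁻¹ y * zetaC p ^ (Algebra.trace (ZMod p) F (-y)).val := by
          unfold gaussSumF
          rw [map_sum]
          refine Finset.sum_congr rfl fun y _ => ?_
          rw [map_mul, map_pow, hconjζ, inv_pow, ← hneg, map_neg]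
          congr 1
          exact MulChar.star_apply' χ y
    _ = ∑ y : F, χ⁻¹ (-y) * zetaC p ^ (Algebra.trace (ZMod p) F y).val := by
          exact Fintype.sum_equiv (Equiv.neg F) _ _ (fun y => by
            simp [Equiv.neg_apply])
    _ = gaussSumF p F (fun y => χ⁻¹ y) := by
          unfold gaussSumF
          refine Finset.sum_congr rfl fun y _ => ?_
          congr 1
          rw [show (-y : F) = -1 * y by ring, map_mul, MulChar.inv_apply_eq_inv' χ (-1),
            hχneg1, inv_one, one_mul]
    _ = gaussSumF p F (fun y => χ y) := hGinv
end

section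
/- Let p be a prime, s ≥ 1, and let χ be a nontrivial multiplicative character of F_{p^{2s}} whose restriction to the subfield F_{p^s} is trivial, i.e. χ(x) = 1 for all x ∈ F_{p^s}^*. Then for every α ∈ F_{p^{2s}} with α ∉ F_{p^s}, one has Σ_{z ∈ F_{p^s}} χ(z + α) = −1. -/
open Finset

theorem stmt6 (p s : ℕ) (hp : p.Prime) (hs : 1 ≤ s)
    (F K : Type) [Field F] [Fintype F] [Field K] [Fintype K]
    (hcardF : Fintype.card F = p ^ s) (hcardK : Fintype.card K = p ^ (2 * s))
    (ι : F →+* K) (χ : MulChar K ℂ) (hnt : χ ≠ 1)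
    (htriv : ∀ x : F, x ≠ 0 → χ (ι x) = 1)
    (α : K) (hα : α ∉ Set.range ι) :
    ∑ z : F, χ (ι z + α) = -1 := by
  classical
  -- key: α times a nonzero element of F is never in F
  have key : ∀ a b : F, ι a * α = ι b → a = 0 := by
    intro a b h
    by_contra ha
    apply hα
    refine ⟨b * a⁻¹, ?_⟩
    have hιa : ι a ≠ 0 := fun h0 => ha (by simpa using ι.injective (h0.trans (map_zero ι).symm))
    rw [map_mul, map_inv₀]
    field_simp
    linear_combination -h
  have hne : ∀ z : F, ι z + α ≠ 0 := by
    intro z h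
    exact hα ⟨-z, by rw [map_neg]; linear_combination -h⟩
  -- the map
  set v : Option F → K := fun o => Option.elim o 1 (fun z => ι z + α) with hv
  have hvne : ∀ o, v o ≠ 0 := by rintro (_ | z) <;> simp [v, hne]
  set h : F × Option F → K := fun co => ι co.1 * v co.2 with hh
  set T : Finset (F × Option F) := (univ.filter (· ≠ 0)) ×ˢ univ with hT
  have hinj : Set.InjOn h T := by
    rintro ⟨c, o⟩ hco ⟨c', o'⟩ hco' heq
    simp only [hT, Finset.mem_coe, mem_product, mem_filter, mem_univ, true_and,
      and_true] at hco hco'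
    simp only [hh] at heq
    match o, o' with
    | none, none =>
        simp only [v, Option.elim, mul_one] at heq
        exact Prod.ext (ι.injective heq) rfl
    | none, some z =>
        exfalso
        simp only [v, Option.elim, mul_one] at heq
        have : ι c' * α = ι (c - c' * z) := by
          rw [map_sub, map_mul]; ring_nf; linear_combination -heq
        exact hco' (key _ _ this)
    | some z, none =>
        exfalso
        simp only [v, Option.elim, mul_one] at heq
        have : ι c * α = ι (c' - c * z) := by
          rw [map_sub, map_mul]; ring_nf; linear_combination heq
        exact hco (key _ _ this)
    | some z, some w =>
        simp only [v, Option.elim] at heq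
        have hcc : c = c' := by
          have h2 : ι (c - c') * α = ι (c' * w - c * z) := by
            rw [map_sub, map_sub, map_mul, map_mul]; linear_combination heq
          exact sub_eq_zero.mp (key _ _ h2)
        subst hcc
        have hιc : ι c ≠ 0 := fun h0 =>
          hco (by simpa using ι.injective (h0.trans (map_zero ι).symm))
        have hzw : z = w := by
          have : ι c * ι z = ι c * ι w := by linear_combination heq
          exact ι.injective (mul_left_cancel₀ hιc this)
        rw [hzw]
  -- image of T is exactly K \ {0}
  have himage : T.image h = (univ : Finset K).filter (· ≠ 0) := by
    apply Finset.eq_of_subset_of_card_le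
    · intro y hy
      simp only [mem_image] at hy
      obtain ⟨⟨c, o⟩, hco, rfl⟩ := hy
      simp only [hT, mem_product, mem_filter, mem_univ, true_and] at hco
      have hιc : ι c ≠ 0 := fun h0 =>
        hco.1 (by simpa using ι.injective (h0.trans (map_zero ι).symm))
      simp only [mem_filter, mem_univ, true_and, hh]
      exact mul_ne_zero hιc (hvne _)
    · have hcardT : T.card = (Fintype.card F - 1) * (Fintype.card F + 1) := by
        simp only [hT, card_product, card_univ, Fintype.card_option]
        congr 1
        rw [filter_ne', card_erase_of_mem (mem_univ _), card_univ]
      have hTimg : (T.image h).card = T.card := Finset.card_image_of_injOn hinj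
      rw [hTimg, hcardT, filter_ne', card_erase_of_mem (mem_univ _), card_univ,
        hcardF, hcardK, two_mul, pow_add]
      obtain ⟨k, hk⟩ : ∃ k, p ^ s = k + 1 :=
        ⟨p ^ s - 1, by have := Nat.one_le_pow s p hp.pos; omega⟩
      rw [hk]
      have e : (k + 1) * (k + 1) = k * (k + 2) + 1 := by ring
      rw [e]
      simp
  -- sum over K equals sum over T
  have hsum0 : ∑ a : K, χ a = 0 := MulChar.sum_eq_zero_of_ne_one hnt
  have hχ0 : χ (0 : K) = 0 := χ.map_zero
  have hsumK : ∑ y ∈ (univ : Finset K).filter (· ≠ 0), χ y = 0 := by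
    rw [filter_ne', Finset.sum_erase _ hχ0]
    exact hsum0
  have hsumT : ∑ co ∈ T, χ (h co) = ((Fintype.card F : ℂ) - 1) * (1 + ∑ z : F, χ (ι z + α)) := by
    rw [hT, Finset.sum_product]
    have : ∀ c ∈ (univ : Finset F).filter (· ≠ 0),
        ∑ o : Option F, χ (h (c, o)) = 1 + ∑ z : F, χ (ι z + α) := by
      intro c hc
      simp only [mem_filter, mem_univ, true_and] at hc
      rw [Fintype.sum_option]
      have hmul : ∀ o : Option F, χ (h (c, o)) = χ (ι c) * χ (v o) := by
        intro o; simp only [hh]; exact map_mul χ _ _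
      simp only [hmul, htriv c hc, one_mul]
      simp [v]
    rw [Finset.sum_congr rfl this, Finset.sum_const, filter_ne',
      card_erase_of_mem (mem_univ _), card_univ, nsmul_eq_mul]
    have h1 : 1 ≤ Fintype.card F := Fintype.card_pos
    push_cast [Nat.cast_sub h1]
    ring
  have heq : ((Fintype.card F : ℂ) - 1) * (1 + ∑ z : F, χ (ι z + α)) = 0 := by
    rw [← hsumT, ← hsumK, ← himage, Finset.sum_image (fun a ha b hb => hinj ha hb)]
  have hcard2 : 2 ≤ Fintype.card F := by
    rw [hcardF]
    calc 2 ≤ p := hp.two_le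
    _ = p ^ 1 := (pow_one p).symm
    _ ≤ p ^ s := Nat.pow_le_pow_right hp.pos hs
  have hne' : ((Fintype.card F : ℂ) - 1) ≠ 0 := by
    have : (Fintype.card F : ℂ) ≠ 1 := by
      intro hc
      have : (Fintype.card F : ℂ) = ((1 : ℕ) : ℂ) := by simpa using hc
      have := Nat.cast_injective (R := ℂ) this
      omega
    intro hc
    exact this (by linear_combination hc)
  have := mul_eq_zero.mp heq
  rcases this with h1 | h2
  · exact absurd h1 hne'
  · linear_combination h2
end

section
/- Let p be a prime with p ≡ 5 (mod 6), let s ≥ 1 be even, and let χ be a nontrivial cubic multiplicative character of F_{p^{2s}}. Then G_{2s}(1,χ) = (−p)^{s/2} · G_s(1,χ), where G_s(1,χ) is the Gauss sum over F_{p^s} of the restriction of χ to the subfield F_{p^s}. -/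
open Finset

private lemma two_pow_mod3 (m : ℕ) : 2 ^ m % 3 = if Even m then 1 else 2 := by
  induction m with
  | zero => simp
  | succ n ih =>
    rw [pow_succ, Nat.mul_mod, ih]
    by_cases h : Even n
    · simp [h, Nat.even_add_one]
    · simp [h, Nat.even_add_one]

private lemma pow_mod3_of_two (p m : ℕ) (hp3 : p % 3 = 2) :
    p ^ m % 3 = if Even m then 1 else 2 := by
  rw [Nat.pow_mod, hp3, two_pow_mod3]

private lemma zetaC_prim (p : ℕ) (hp : p ≠ 0) : IsPrimitiveRoot (zetaC p) p :=
  Complex.isPrimitiveRoot_exp p hp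

private lemma cube_root_im_ne {μ : ℂ} (h3 : μ ^ 3 = 1) (h1 : μ ≠ 1) : μ.im ≠ 0 := by
  intro h0
  apply h1
  have hre : (μ.re : ℂ) = μ := Complex.ext rfl (by simp [h0])
  have hx3 : (μ.re : ℝ) ^ 3 = 1 := by
    have : ((μ.re : ℂ)) ^ 3 = ((1 : ℝ) : ℂ) := by rw [hre, h3]; norm_num
    exact_mod_cast this
  set x := μ.re with hx
  have hfac : (x - 1) * (x ^ 2 + x + 1) = 0 := by linear_combination hx3
  have hpos : x ^ 2 + x + 1 > 0 := by nlinarith [sq_nonneg (2 * x + 1)]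
  have hx1 : x = 1 := by
    rcases mul_eq_zero.mp hfac with h | h
    · linarith [sub_eq_zero.mp h]
    · linarith
  rw [← hre, hx1]
  norm_num

private lemma mem_adjoin_cube {μ : ℂ} (hsq : μ ^ 2 = -1 - μ) {z : ℂ}
    (hz : z ∈ Algebra.adjoin ℤ {μ}) : ∃ a b : ℤ, z = a + b * μ := by
  induction hz using Algebra.adjoin_induction with
  | mem x hx =>
    rw [Set.mem_singleton_iff] at hx
    exact ⟨0, 1, by rw [hx]; push_cast; ring⟩
  | algebraMap r => exact ⟨r, 0, by simp⟩
  | add x y hx hy ihx ihy =>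
    obtain ⟨a, b, rfl⟩ := ihx
    obtain ⟨c, d, rfl⟩ := ihy
    exact ⟨a + c, b + d, by push_cast; ring⟩
  | mul x y hx hy ihx ihy =>
    obtain ⟨a, b, rfl⟩ := ihx
    obtain ⟨c, d, rfl⟩ := ihy
    refine ⟨a * c - b * d, a * d + b * c - b * d, ?_⟩
    push_cast
    linear_combination ((b : ℂ) * d) * hsq

private lemma trace_frob (p : ℕ) (hp : p.Prime) (L : Type) [Field L] [Fintype L]
    [Algebra (ZMod p) L] (y : L) :
    Algebra.trace (ZMod p) L (y ^ p) = Algebra.trace (ZMod p) L y := by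
  haveI : Fact p.Prime := ⟨hp⟩
  haveI : CharP L p := charP_of_injective_algebraMap (algebraMap (ZMod p) L).injective p
  let e : L ≃ₐ[ZMod p] L :=
    AlgEquiv.ofRingEquiv (f := frobeniusEquiv L p) (fun c => by
      simp only [frobeniusEquiv_apply, frobenius_def]
      rw [← map_pow, ZMod.pow_card])
  have h := Algebra.trace_eq_of_algEquiv e y
  have hey : e y = y ^ p := rfl
  rw [hey] at h
  exact h

set_option maxHeartbeats 1000000 in
/-- The key evaluation: the Gauss sum of a cubic character over a finite field of
cardinality `p ^ (2*m)` with `p ≡ 2 mod 3` equals `(-1)^(m-1) * p^m`. -/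
private lemma cubic_gauss (p m : ℕ) (hp : p.Prime) (hp3 : p % 3 = 2) (hm : 1 ≤ m)
    (L : Type) [Field L] [Fintype L] [Algebra (ZMod p) L]
    (hcard : Fintype.card L = p ^ (2 * m))
    (φ : MulChar L ℂ) (hord : orderOf φ = 3) :
    gaussSumF p L (fun y => φ y) = (-1) ^ (m - 1) * (p : ℂ) ^ m := by
  haveI : Fact p.Prime := ⟨hp⟩
  haveI : NeZero p := ⟨hp.ne_zero⟩
  haveI : CharP L p := charP_of_injective_algebraMap (algebraMap (ZMod p) L).injective p
  haveI : FiniteDimensional (ZMod p) L := Module.Finite.of_finite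
  have hζ : IsPrimitiveRoot (zetaC p) p := zetaC_prim p hp.ne_zero
  set ψ : AddChar L ℂ :=
    (AddChar.zmodChar p hζ.pow_eq_one).compAddMonoidHom
      (Algebra.trace (ZMod p) L).toAddMonoidHom with hψdef
  have hψapp : ∀ y : L, ψ y = zetaC p ^ (Algebra.trace (ZMod p) L y).val := fun y => rfl
  have hGF : gaussSumF p L (fun y => φ y) = gaussSum φ ψ := by
    unfold gaussSumF gaussSum
    exact Finset.sum_congr rfl fun y _ => by rw [hψapp]
  -- ψ is primitive
  have hψ1 : ψ ≠ 1 := by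
    intro h
    obtain ⟨t, ht⟩ := Algebra.trace_surjective (ZMod p) L 1
    have h1 : ψ t = 1 := by rw [h]; rfl
    rw [hψapp, ht] at h1
    haveI : Fact (1 < p) := ⟨hp.one_lt⟩
    rw [ZMod.val_one] at h1
    exact hζ.ne_one hp.one_lt (by rw [← pow_one (zetaC p), h1])
  have hψp : ψ.IsPrimitive := AddChar.IsPrimitive.of_ne_one hψ1
  -- basic facts about φ
  have hφ1 : φ ≠ 1 := by
    intro h
    rw [h, orderOf_one] at hord
    omega
  have hφ3 : φ ^ 3 = 1 := hord ▸ pow_orderOf_eq_one φ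
  have hφm1 : φ (-1) = 1 :=
    MulChar.val_neg_one_eq_one_of_odd_order ⟨1, by norm_num⟩ hφ3
  have hφinv : φ⁻¹ = φ ^ 2 := by
    refine inv_eq_of_mul_eq_one_right ?_
    rw [← pow_succ']
    exact hφ3
  have hφ2ne : φ ^ 2 ≠ 1 := by
    intro h
    have h2 := orderOf_dvd_of_pow_eq_one h
    rw [hord] at h2
    omega
  -- Frobenius invariance
  have hfrob : gaussSum (φ ^ p) ψ = gaussSum φ ψ := by
    unfold gaussSum
    have hbij : Function.Bijective (fun y : L => y ^ p) := (frobeniusEquiv L p).bijective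
    calc ∑ y : L, (φ ^ p) y * ψ y
        = ∑ y : L, φ (y ^ p) * ψ (y ^ p) := by
          refine Finset.sum_congr rfl fun y _ => ?_
          rw [MulChar.pow_apply' φ hp.ne_zero, map_pow, hψapp, hψapp,
            trace_frob p hp L y]
      _ = ∑ y : L, φ y * ψ y :=
          Fintype.sum_bijective _ hbij _ _ (fun y => rfl)
  have hp2 : φ ^ p = φ ^ 2 := by
    calc φ ^ p = φ ^ (p % orderOf φ) := (pow_mod_orderOf φ p).symm
      _ = φ ^ 2 := by rw [hord, hp3]
  set g := gaussSum φ ψ with hgdef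
  have hg2 : gaussSum (φ ^ 2) ψ = g := by rw [← hp2, hfrob]
  -- g * g = p ^ (2m)
  have hgg : g * g = (p : ℂ) ^ (2 * m) := by
    have h1 := gaussSum_mul_gaussSum_eq_card hφ1 hψp
    have h3 := mul_gaussSum_inv_eq_gaussSum φ⁻¹ ψ
    have hm1 : φ⁻¹ (-1) = 1 := by
      rw [hφinv, MulChar.pow_apply' _ (by norm_num : (2:ℕ) ≠ 0), hφm1, one_pow]
    rw [hm1, one_mul] at h3
    rw [h3, hφinv, hg2] at h1
    rw [h1, hcard]
    push_cast
    ring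
  have hgne : g ≠ 0 := by
    intro h0
    rw [h0, mul_zero] at hgg
    have : (p : ℂ) ^ (2 * m) ≠ 0 := by
      apply pow_ne_zero
      exact_mod_cast hp.ne_zero
    exact this hgg.symm
  -- Jacobi sum equals g
  have hmulne : φ * φ ≠ 1 := by rwa [← sq]
  have hJ := jacobiSum_mul_nontrivial hmulne ψ
  have hgmul : gaussSum (φ * φ) ψ = g := by rw [← sq, hg2]
  rw [hgmul] at hJ
  have hJg : jacobiSum φ φ = g := mul_left_cancel₀ hgne hJ
  -- the congruence mod (μ - 1)^2
  have hμ : IsPrimitiveRoot (zetaC 3) 3 := zetaC_prim 3 (by norm_num)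
  set μ := zetaC 3 with hμdef
  have hμ3 : μ ^ 3 = 1 := hμ.pow_eq_one
  have hμne1 : μ ≠ 1 := hμ.ne_one (by norm_num)
  have hμsq : μ ^ 2 = -1 - μ := by
    have h2 : (μ - 1) * (μ ^ 2 + μ + 1) = 0 := by linear_combination hμ3
    rcases mul_eq_zero.mp h2 with h | h
    · exact absurd (sub_eq_zero.mp h) hμne1
    · linear_combination h
  have hdvd : (3 : ℕ) ∣ Fintype.card L - 1 := by
    rw [hcard]
    have hmod : p ^ (2 * m) % 3 = 1 := by
      rw [pow_mod3_of_two p _ hp3, if_pos ⟨m, two_mul m⟩]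
    have hge : 1 ≤ p ^ (2 * m) := Nat.one_le_pow _ _ hp.pos
    omega
  obtain ⟨z, hzmem, hzeq⟩ :=
    exists_jacobiSum_eq_neg_one_add (by norm_num) hφ3 hφ3 hdvd hμ
  obtain ⟨a, b, rfl⟩ := mem_adjoin_cube hμsq hzmem
  rw [hJg] at hzeq
  -- g = (3b - 1) + 3(b - a) μ
  have hgab : g = ((3 * b - 1 : ℤ) : ℂ) + ((3 * (b - a) : ℤ) : ℂ) * μ := by
    push_cast
    linear_combination hzeq + ((a : ℂ) + (b : ℂ) * (μ - 3)) * hμsq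
  have him : μ.im ≠ 0 := cube_root_im_ne hμ3 hμne1
  -- extraction of integer information
  have key : ∀ c : ℤ, (c : ℂ) = g → c = 3 * b - 1 ∧ a = b := by
    intro c hc
    rw [hgab] at hc
    have him0 := congrArg Complex.im hc
    simp only [Complex.intCast_im, Complex.add_im, Complex.mul_im, Complex.intCast_re,
      Complex.ofReal_im] at him0
    -- 0 = (3(b-a)) * μ.im
    have hba : ((3 * (b - a) : ℤ) : ℝ) = 0 := by
      rcases mul_eq_zero.mp (by linarith [him0] : ((3 * (b - a) : ℤ) : ℝ) * μ.im = 0) with h | h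
      · exact h
      · exact absurd h him
    have hab : a = b := by
      have : (3 : ℤ) * (b - a) = 0 := by exact_mod_cast hba
      omega
    refine ⟨?_, hab⟩
    rw [hab] at hc
    simp only [sub_self, mul_zero, Int.cast_zero, zero_mul, add_zero] at hc
    exact_mod_cast hc
  -- g = ± p^m
  have hcases : g = (p : ℂ) ^ m ∨ g = -(p : ℂ) ^ m := by
    have hfac : (g - (p : ℂ) ^ m) * (g + (p : ℂ) ^ m) = 0 := by
      have hpm : ((p : ℂ) ^ m) * ((p : ℂ) ^ m) = (p : ℂ) ^ (2 * m) := by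
        rw [← pow_add]; congr 1; omega
      linear_combination hgg - hpm
    rcases mul_eq_zero.mp hfac with h | h
    · left; linear_combination h
    · right; linear_combination h
  have hmmod := pow_mod3_of_two p m hp3
  rcases hcases with hcase | hcase
  · -- g = p^m : then m must be odd
    have hc := key (p ^ m) (by rw [hcase]; push_cast; ring)
    rcases Nat.even_or_odd m with hevm | hodm
    · exfalso
      rw [if_pos hevm] at hmmod
      have : ((p ^ m : ℕ) : ℤ) = 3 * b - 1 := by exact_mod_cast hc.1
      omega
    · have : (-1 : ℂ) ^ (m - 1) = 1 := Even.neg_one_pow (by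
        obtain ⟨k, hk⟩ := hodm
        exact ⟨k, by omega⟩)
      rw [hGF, hcase, this, one_mul]
  · -- g = -p^m : then m must be even
    have hc := key (-(p ^ m)) (by rw [hcase]; push_cast; ring)
    rcases Nat.even_or_odd m with hevm | hodm
    · have : (-1 : ℂ) ^ (m - 1) = -1 := Odd.neg_one_pow (by
        obtain ⟨k, hk⟩ := hevm
        exact ⟨k - 1, by omega⟩)
      rw [hGF, hcase, this]
      ring
    · exfalso
      rw [if_neg (Nat.not_even_iff_odd.mpr hodm)] at hmmod
      have : -((p ^ m : ℕ) : ℤ) = 3 * b - 1 := by exact_mod_cast hc.1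
      omega

theorem stmt8 (p s : ℕ) (hp : p.Prime) (hp6 : p % 6 = 5) (hs : 1 ≤ s) (heven : Even s)
    (F K : Type) [Field F] [Fintype F] [Field K] [Fintype K]
    [Algebra (ZMod p) F] [Algebra (ZMod p) K]
    (hcardF : Fintype.card F = p ^ s) (hcardK : Fintype.card K = p ^ (2 * s))
    (ι : F →+* K)
    (χ : MulChar K ℂ) (hnt : χ ≠ 1) (hord : orderOf χ = 3) :
    gaussSumF p K (fun y => χ y) =
      (-(p : ℂ)) ^ (s / 2) * gaussSumF p F (fun y => χ (ι y)) := by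
  have hp3 : p % 3 = 2 := by omega
  have hχ3 : χ ^ 3 = 1 := hord ▸ pow_orderOf_eq_one χ
  obtain ⟨t, hst⟩ := heven
  have ht1 : 1 ≤ t := by omega
  -- the restricted character
  let χF : MulChar F ℂ :=
    { toFun := fun x => χ (ι x)
      map_one' := by simp
      map_mul' := fun x y => by simp
      map_nonunit' := fun x hx => by
        have hx0 : x = 0 := by
          by_contra h
          exact hx (isUnit_iff_ne_zero.mpr h)
        show χ (ι x) = 0
        rw [hx0, map_zero, MulChar.map_zero] }
  have hχFapp : ∀ y : F, χ (ι y) = χF y := fun _ => rfl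
  -- χF ^ 3 = 1
  have hχF3 : χF ^ 3 = 1 := by
    refine MulChar.ext fun u => ?_
    rw [MulChar.pow_apply_coe, MulChar.one_apply_coe]
    have hu : IsUnit (ι (u : F)) := by
      apply isUnit_iff_ne_zero.mpr
      intro h
      have := ι.injective (h.trans (map_zero ι).symm)
      exact u.ne_zero this
    have h1 : (χ ^ 3) (ι (u : F)) = (1 : MulChar K ℂ) (ι (u : F)) := by rw [hχ3]
    rw [MulChar.pow_apply' χ (by norm_num), MulChar.one_apply hu] at h1
    exact h1
  -- χF is nontrivial
  have hχF1 : χF ≠ 1 := by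
    classical
    intro h1
    obtain ⟨g, hg⟩ := IsCyclic.exists_generator (α := Fˣ)
    obtain ⟨G, hG⟩ := IsCyclic.exists_generator (α := Kˣ)
    set u : Kˣ := Units.map (ι : F →* K) g with hudef
    have hui : Function.Injective (Units.map (ι : F →* K)) :=
      Units.map_injective ι.injective
    have hou : orderOf u = p ^ s - 1 := by
      rw [hudef, orderOf_injective _ hui, orderOf_eq_card_of_forall_mem_zpowers hg,
        Nat.card_eq_fintype_card, Fintype.card_units, hcardF]
    have hoG : orderOf G = p ^ (2 * s) - 1 := by
      rw [orderOf_eq_card_of_forall_mem_zpowers hG, Nat.card_eq_fintype_card,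
        Fintype.card_units, hcardK]
    obtain ⟨e, he0⟩ := mem_powers_iff_mem_zpowers.mpr (hG u)
    have he : G ^ e = u := he0
    -- N := p^(2s) - 1 = (q+1)(q-1), q := p^s
    set q := p ^ s with hqdef
    have hq2 : 2 ≤ q := le_trans hp.two_le (Nat.le_self_pow (by omega) p)
    have hNfact : p ^ (2 * s) - 1 = (q + 1) * (q - 1) := by
      have hqq : p ^ (2 * s) = q * q := by rw [hqdef, ← pow_add]; congr 1; omega
      obtain ⟨r, hr⟩ : ∃ r, q = r + 1 := ⟨q - 1, by omega⟩
      rw [hqq, hr]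
      have h1 : (r + 1) * (r + 1) = (r + 1 + 1) * r + 1 := by ring
      rw [h1, Nat.add_sub_cancel, Nat.add_sub_cancel]
    -- gcd computation
    have hgcd : Nat.gcd (p ^ (2 * s) - 1) e = q + 1 := by
      have hod : orderOf (G ^ e) = orderOf G / Nat.gcd (orderOf G) e := orderOf_pow G
      rw [he, hou, hoG] at hod
      have hdvd : Nat.gcd (p ^ (2 * s) - 1) e ∣ p ^ (2 * s) - 1 := Nat.gcd_dvd_left _ _
      have hN : p ^ (2 * s) - 1 = Nat.gcd (p ^ (2 * s) - 1) e * (q - 1) :=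
        (Nat.eq_mul_of_div_eq_right hdvd hod.symm)
      have h2 : (q + 1) * (q - 1) = Nat.gcd (p ^ (2 * s) - 1) e * (q - 1) := by
        rw [← hNfact]; exact hN
      exact Nat.eq_of_mul_eq_mul_right (by omega : 0 < q - 1) h2.symm
    -- χ (G) has order 3
    have hwne : χ (G : K) ≠ 1 := by
      intro hw
      apply hnt
      refine MulChar.eq_one_iff.mpr fun a => ?_
      obtain ⟨k, hk⟩ := mem_powers_iff_mem_zpowers.mpr (hG a)
      rw [← hk, Units.val_pow_eq_pow_val, map_pow, hw, one_pow]
    have hw3 : χ (G : K) ^ 3 = 1 := by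
      have h1 : (χ ^ 3) (G : K) = (1 : MulChar K ℂ) (G : K) := by rw [hχ3]
      rwa [MulChar.pow_apply' χ (by norm_num), MulChar.one_apply_coe] at h1
    have how : orderOf (χ (G : K)) = 3 := by
      have hdvd := orderOf_dvd_of_pow_eq_one hw3
      have hne1 : orderOf (χ (G : K)) ≠ 1 := fun h => hwne (orderOf_eq_one_iff.mp h)
      rcases (Nat.Prime.eq_one_or_self_of_dvd (by norm_num) _ hdvd) with h | h
      · exact absurd h hne1
      · exact h
    -- χ(u) = 1 gives 3 ∣ e
    have hchiu : χ (u : K) = 1 := by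
      have h2 : χ (ι (g : F)) = 1 := by
        have h3 : χF (g : F) = 1 := by rw [h1, MulChar.one_apply_coe]
        exact h3
      simpa [hudef, Units.coe_map] using h2
    have hwe : χ (G : K) ^ e = 1 := by
      rw [← map_pow, ← Units.val_pow_eq_pow_val, he]
      exact hchiu
    have h3e : (3 : ℕ) ∣ e := how ▸ orderOf_dvd_of_pow_eq_one hwe
    have h3N : (3 : ℕ) ∣ p ^ (2 * s) - 1 := by
      have hmod : p ^ (2 * s) % 3 = 1 := by
        rw [pow_mod3_of_two p _ hp3, if_pos ⟨s, two_mul s⟩]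
      have hge : 1 ≤ p ^ (2 * s) := Nat.one_le_pow _ _ hp.pos
      omega
    have h3gcd : (3 : ℕ) ∣ q + 1 := hgcd ▸ Nat.dvd_gcd h3N h3e
    -- but q ≡ 1 mod 3
    have hqmod : q % 3 = 1 := by
      rw [hqdef, pow_mod3_of_two p _ hp3, if_pos ⟨t, by omega⟩]
    omega
  have hχFord : orderOf χF = 3 := by
    have hdvd := orderOf_dvd_of_pow_eq_one hχF3
    have hne1 : orderOf χF ≠ 1 := fun h => hχF1 (orderOf_eq_one_iff.mp h)
    rcases (Nat.Prime.eq_one_or_self_of_dvd (by norm_num) _ hdvd) with h | h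
    · exact absurd h hne1
    · exact h
  -- apply the main evaluation on both sides
  have hK := cubic_gauss p s hp hp3 hs K hcardK χ hord
  have hF := cubic_gauss p t hp hp3 ht1 F
    (by rw [hcardF]; congr 1; omega) χF hχFord
  have hFfun : gaussSumF p F (fun y => χ (ι y)) = gaussSumF p F (fun y => χF y) := rfl
  rw [hK, hFfun, hF]
  have hs2 : s / 2 = t := by omega
  rw [hs2]
  -- numerical identity
  calc (-1 : ℂ) ^ (s - 1) * (p : ℂ) ^ s
      = ((-1 : ℂ) ^ t * (-1 : ℂ) ^ (t - 1)) * ((p : ℂ) ^ t * (p : ℂ) ^ t) := by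
        rw [← pow_add, ← pow_add, show t + (t - 1) = s - 1 by omega,
          show t + t = s by omega]
    _ = (-(p : ℂ)) ^ t * ((-1) ^ (t - 1) * (p : ℂ) ^ t) := by
        rw [neg_pow]; ring
end

section
/- Let p be a prime with p ≡ 5 (mod 6), let s ≥ 1 be even, and let χ be a nontrivial cubic multiplicative character of F_{p^{2s}}. Then G_{2s}(1,χ) = −p^s. -/
open Finset

theorem stmt9 (p s : ℕ) (hp : p.Prime) (hp6 : p % 6 = 5) (hs : 1 ≤ s) (heven : Even s)
    (K : Type) [Field K] [Fintype K] [Algebra (ZMod p) K]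
    (hcard : Fintype.card K = p ^ (2 * s))
    (χ : MulChar K ℂ) (hnt : χ ≠ 1) (hord : orderOf χ = 3) :
    gaussSumF p K (fun y => χ y) = -(p : ℂ) ^ s := by
  classical
  have hp3 : p % 3 = 2 := by omega
  haveI : Fact p.Prime := ⟨hp⟩
  haveI : NeZero p := ⟨hp.ne_zero⟩
  haveI : CharP K p := charP_of_injective_algebraMap (algebraMap (ZMod p) K).injective p
  haveI : Module.Finite (ZMod p) K := Module.Finite.of_finite
  -- the primitive p-th root of unity
  have hζ : IsPrimitiveRoot (zetaC p) p := Complex.isPrimitiveRoot_exp p hp.ne_zero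
  have hζp : zetaC p ^ p = 1 := hζ.pow_eq_one
  -- the additive character
  set ψ₀ : AddChar (ZMod p) ℂ := AddChar.zmodChar p hζp with hψ₀
  set ψ : AddChar K ℂ := ψ₀.compAddMonoidHom (Algebra.trace (ZMod p) K).toAddMonoidHom with hψdef
  have hψ : ∀ y : K, ψ y = zetaC p ^ (Algebra.trace (ZMod p) K y).val := fun y => rfl
  have hψne : ψ ≠ 1 := by
    obtain ⟨x, hx⟩ := Algebra.trace_surjective (ZMod p) K 1
    refine AddChar.ne_one_iff.2 ⟨x, ?_⟩
    rw [hψ x, hx, ZMod.val_one p, pow_one]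
    exact hζ.ne_one hp.one_lt
  have hψprim : ψ.IsPrimitive := AddChar.IsPrimitive.of_ne_one hψne
  have hgF : gaussSumF p K (fun y => χ y) = gaussSum χ ψ := rfl
  set g : ℂ := gaussSum χ ψ with hgdef
  -- χ^3 = 1 and χ^2 = χ⁻¹
  have h3 : χ ^ 3 = 1 := by rw [← hord]; exact pow_orderOf_eq_one χ
  have hχ2 : χ ^ 2 = χ⁻¹ := by
    refine eq_inv_of_mul_eq_one_left ?_
    rw [← pow_succ]; exact h3
  have hχp : χ ^ p = χ⁻¹ := by
    have h1 : χ ^ (p % orderOf χ) = χ ^ p := pow_mod_orderOf χ p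
    rw [hord, hp3] at h1
    rw [← h1, hχ2]
  -- Frobenius invariance : g = gaussSum χ⁻¹ ψ
  have frobBij : Function.Bijective (fun y : K => y ^ p) := by
    have hinj : Function.Injective (fun y : K => y ^ p) := fun a b hab =>
      frobenius_inj K p hab
    exact Finite.injective_iff_bijective.mp hinj
  let e : K ≃ₐ[ZMod p] K :=
    AlgEquiv.ofBijective
      { toFun := fun y => y ^ p
        map_one' := one_pow p
        map_mul' := fun a b => mul_pow a b p
        map_zero' := zero_pow hp.ne_zero
        map_add' := fun a b => add_pow_char a b p
        commutes' := fun c => by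
          show (algebraMap (ZMod p) K) c ^ p = (algebraMap (ZMod p) K) c
          rw [← map_pow (algebraMap (ZMod p) K) c p, ZMod.pow_card] }
      frobBij
  have htr : ∀ y : K, Algebra.trace (ZMod p) K (y ^ p) = Algebra.trace (ZMod p) K y :=
    fun y => Algebra.trace_eq_of_algEquiv e y
  have hψfrob : ∀ y : K, ψ (y ^ p) = ψ y := fun y => by rw [hψ, hψ, htr]
  have hA : g = gaussSum χ⁻¹ ψ := by
    have hstep : gaussSum χ ψ = ∑ y : K, χ (y ^ p) * ψ (y ^ p) :=
      (Fintype.sum_bijective _ frobBij (fun y : K => χ (y ^ p) * ψ (y ^ p))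
        (fun x : K => χ x * ψ x) (fun y => rfl)).symm
    rw [hgdef, hstep]
    unfold gaussSum
    refine Finset.sum_congr rfl fun y _ => ?_
    rw [hψfrob y, map_pow, ← MulChar.pow_apply' χ hp.ne_zero, hχp]
  -- χ (-1) = 1
  have hm1 : χ (-1) = 1 := by
    have h2 : χ (-1) ^ 2 = 1 := by rw [← map_pow]; norm_num
    have h3' : χ (-1) ^ 3 = 1 := by
      rw [← MulChar.pow_apply' χ (by norm_num : (3:ℕ) ≠ 0), h3,
        MulChar.one_apply isUnit_one.neg]
    rw [pow_succ, h2, one_mul] at h3'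
    exact h3'
  -- g * g = p ^ (2*s)
  have hB : g * g = ((p : ℂ)) ^ (2 * s) := by
    have hmain := gaussSum_mul_gaussSum_eq_card hnt hψprim
    have hinv : gaussSum χ⁻¹ ψ⁻¹ = g := by
      have hsh : ψ⁻¹ = ψ.mulShift (((-1 : Kˣ) : K)) := by
        ext x
        rw [AddChar.mulShift_apply, AddChar.inv_apply]
        norm_num
      have hstep := gaussSum_mulShift χ⁻¹ ψ (-1 : Kˣ)
      have hval : χ⁻¹ (((-1 : Kˣ) : K)) = 1 := by
        have hcoe : ((-1 : Kˣ) : K) = -1 := by norm_num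
        rw [hcoe, MulChar.inv_apply_eq_inv', hm1, inv_one]
      rw [hval, one_mul, ← hsh] at hstep
      rw [hstep, ← hA]
    rw [hinv, ← hgdef, hcard] at hmain
    rw [hmain]; push_cast; ring
  -- key congruence : 2 g = 1 + 3 T  with  T an algebraic integer
  set S : Finset K := Finset.univ.filter (fun y => y ≠ 0 ∧ χ y = 1) with hS
  set T : ℂ := ∑ y ∈ S, ψ y with hT
  have hTint : IsIntegral ℤ T := by
    refine IsIntegral.sum _ fun y _ => ?_
    rw [hψ y]
    exact (hζ.isIntegral hp.pos).pow _
  have key : 2 * g = 1 + 3 * T := by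
    have lhs_eq : ∑ y : K, ψ y * (1 + χ y + χ y ^ 2) = 2 * g := by
      have expand : ∑ y : K, ψ y * (1 + χ y + χ y ^ 2) =
          (∑ y : K, ψ y) + (∑ y : K, χ y * ψ y) + (∑ y : K, (χ ^ 2) y * ψ y) := by
        rw [← Finset.sum_add_distrib, ← Finset.sum_add_distrib]
        refine Finset.sum_congr rfl fun y _ => ?_
        rw [MulChar.pow_apply' χ (by norm_num : (2:ℕ) ≠ 0)]
        ring
      rw [expand, AddChar.sum_eq_zero_of_ne_one hψne]
      have e1 : (∑ y : K, (χ ^ 2) y * ψ y) = gaussSum (χ ^ 2) ψ := rfl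
      have e2 : (∑ y : K, χ y * ψ y) = g := rfl
      rw [e1, hχ2, ← hA, e2]; ring
    have rhs_eq : ∑ y : K, ψ y * (1 + χ y + χ y ^ 2) = 1 + 3 * T := by
      have pointwise : ∀ y : K, ψ y * (1 + χ y + χ y ^ 2) =
          (if y = 0 then (1 : ℂ) else 0) + (if y ≠ 0 ∧ χ y = 1 then 3 * ψ y else 0) := by
        intro y
        by_cases hy : y = 0
        · subst hy
          rw [MulChar.map_nonunit χ not_isUnit_zero, AddChar.map_zero_eq_one]
          simp
        · have hy3 : χ y ^ 3 = 1 := by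
            rw [← MulChar.pow_apply' χ (by norm_num : (3:ℕ) ≠ 0), h3,
              MulChar.one_apply (Ne.isUnit hy)]
          by_cases hc : χ y = 1
          · rw [hc]
            simp only [hy, hc, if_neg, if_pos, and_self, ne_eq, not_false_eq_true,
              if_false]
            ring
          · have hfac : (χ y - 1) * (1 + χ y + χ y ^ 2) = 0 := by
              have hring : (χ y - 1) * (1 + χ y + χ y ^ 2) = χ y ^ 3 - 1 := by ring
              rw [hring, hy3, sub_self]
            have hz : 1 + χ y + χ y ^ 2 = 0 :=
              (mul_eq_zero.mp hfac).resolve_left (sub_ne_zero.mpr hc)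
            rw [hz, mul_zero]
            simp [hy, hc]
      rw [Finset.sum_congr rfl fun y _ => pointwise y, Finset.sum_add_distrib]
      have h1 : (∑ y : K, if y = 0 then (1:ℂ) else 0) = 1 := by simp
      have h2 : (∑ y : K, if y ≠ 0 ∧ χ y = 1 then 3 * ψ y else 0) = 3 * T := by
        rw [← Finset.sum_filter, hT, hS, Finset.mul_sum]
      rw [h1, h2]
    rw [← lhs_eq, rhs_eq]
  -- g = ± p^s
  have hfac : (g - (p:ℂ) ^ s) * (g + (p:ℂ) ^ s) = 0 := by
    have h2s : ((p : ℂ)) ^ (2 * s) = (p:ℂ) ^ s * (p:ℂ) ^ s := by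
      rw [two_mul, pow_add]
    linear_combination hB + h2s
  rcases mul_eq_zero.mp hfac with h | h
  · -- impossible case g = p^s
    exfalso
    have hg : g = (p:ℂ) ^ s := sub_eq_zero.mp h
    have h3T : 3 * T = 2 * (p:ℂ) ^ s - 1 := by
      rw [hg] at key
      linear_combination -key
    -- T is rational
    set r : ℚ := (2 * (p:ℚ) ^ s - 1) / 3 with hr
    have hrT : (algebraMap ℚ ℂ) r = T := by
      have h3ne : (3 : ℂ) ≠ 0 := by norm_num
      rw [eq_ratCast (algebraMap ℚ ℂ) r, hr]
      push_cast
      rw [div_eq_iff h3ne]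
      linear_combination -h3T
    have hrint : IsIntegral ℤ r :=
      (isIntegral_algebraMap_iff (algebraMap ℚ ℂ).injective).mp (hrT ▸ hTint)
    obtain ⟨n, hn⟩ := IsIntegrallyClosed.isIntegral_iff.mp hrint
    rw [eq_intCast] at hn
    have hq : (3 : ℚ) * (n : ℚ) = 2 * (p:ℚ) ^ s - 1 := by
      rw [hn, hr]
      field_simp
    have hz : (3 : ℤ) * n = 2 * (p:ℤ) ^ s - 1 := by exact_mod_cast hq
    -- contradiction mod 3
    have hz3 := congrArg (fun m : ℤ => (m : ZMod 3)) hz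
    push_cast at hz3
    have hp33 : ((p : ℕ) : ZMod 3) = 2 := by
      rw [← ZMod.natCast_mod, hp3]
      rfl
    rw [hp33] at hz3
    obtain ⟨t, rfl⟩ := heven
    rw [← two_mul, pow_mul] at hz3
    rw [show ((2 : ZMod 3)) ^ 2 = 1 from by decide, one_pow,
      show (3 : ZMod 3) = 0 from by decide, zero_mul] at hz3
    exact absurd hz3 (by decide)
  · rw [hgF]
    exact add_eq_zero_iff_eq_neg.mp h
end

section
/- Let p ≡ 1 (mod 6) be a prime, let χ be a nontrivial cubic multiplicative character of F_p, and let G_0, G_1, G_2 be the associated Gauss periods. Then there exist integers u, v with 4p = u² + 27v² and u ≡ 1 (mod 3) such that, setting a = (2p − u + 9v − 4)/18, b = (2p − u − 9v − 4)/18, and c = (p + 1 + u)/9, one has a, b, c ∈ ℤ and G_0 G_1 = a G_0 + b G_1 + c G_2, G_1 G_2 = a G_1 + b G_2 + c G_0, and G_2 G_0 = a G_2 + b G_0 + c G_1. -/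
open Finset

/-- `ζ_3 = exp(2πi/3)`. -/
noncomputable def zeta3 : ℂ := Complex.exp (2 * (Real.pi : ℂ) * Complex.I / 3)

open scoped Classical in
/-- The Gauss period `G_j = Σ_{x ∈ F_p^*, χ(x) = ζ_3^j} ζ_p^x` attached to a (cubic)
character `χ` on the prime field `F_p = ZMod p`. -/
noncomputable def gaussPeriodP (p : ℕ) [NeZero p] (χ : ZMod p → ℂ) (j : ℕ) : ℂ :=
  ∑ x ∈ Finset.univ.filter (fun x : ZMod p => x ≠ 0 ∧ χ x = zeta3 ^ j), zetaC p ^ x.val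

/-- The Gauss sum `G_1(1,χ) = Σ_{y ∈ F_p} χ(y) ζ_p^y` over the prime field `F_p = ZMod p`. -/
noncomputable def gaussSumP (p : ℕ) [NeZero p] (χ : ZMod p → ℂ) : ℂ :=
  ∑ y : ZMod p, χ y * zetaC p ^ y.val

/- ### Auxiliary lemmas -/

lemma zeta3_prim : IsPrimitiveRoot zeta3 3 := by
  have := Complex.isPrimitiveRoot_exp 3 (by norm_num)
  simpa [zeta3] using this

lemma zeta3_cube : zeta3 ^ 3 = 1 := zeta3_prim.pow_eq_one

lemma zeta3_ne_zero : zeta3 ≠ 0 := by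
  intro h
  have := zeta3_cube
  rw [h] at this
  norm_num at this

lemma zeta3_rel : zeta3 ^ 2 + zeta3 + 1 = 0 := by
  have h := zeta3_prim.geom_sum_eq_zero (by norm_num)
  simp [Finset.sum_range_succ] at h
  linear_combination h

lemma conj_zeta3 : (starRingEnd ℂ) zeta3 = zeta3 ^ 2 := by
  have h1 : (starRingEnd ℂ) zeta3 * zeta3 = 1 := by
    rw [zeta3, ← Complex.exp_conj, ← Complex.exp_add]
    have h : (starRingEnd ℂ) (2 * (Real.pi : ℂ) * Complex.I / 3)
        + 2 * (Real.pi : ℂ) * Complex.I / 3 = 0 := by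
      simp only [map_div₀, map_mul, Complex.conj_I, Complex.conj_ofReal, map_ofNat]
      ring
    rw [h, Complex.exp_zero]
  have h2 : zeta3 ^ 2 * zeta3 = 1 := by
    rw [← pow_succ]; exact zeta3_cube
  exact mul_right_cancel₀ zeta3_ne_zero (h1.trans h2.symm)

lemma cube_root_trichotomy {t : ℂ} (ht : t ^ 3 = 1) :
    t = 1 ∨ t = zeta3 ∨ t = zeta3 ^ 2 := by
  have h : (t - 1) * ((t - zeta3) * (t - zeta3 ^ 2)) = 0 := by
    linear_combination ht + (-t ^ 2 + t) * zeta3_rel + (t - 1) * zeta3_cube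
  rcases mul_eq_zero.mp h with h' | h'
  · exact Or.inl (sub_eq_zero.mp h')
  · rcases mul_eq_zero.mp h' with h'' | h''
    · exact Or.inr (Or.inl (sub_eq_zero.mp h''))
    · exact Or.inr (Or.inr (sub_eq_zero.mp h''))

lemma mem_adjoin_zeta3 {z : ℂ} (hz : z ∈ Algebra.adjoin ℤ {zeta3}) :
    ∃ m n : ℤ, z = (m : ℂ) + (n : ℂ) * zeta3 := by
  induction hz using Algebra.adjoin_induction with
  | mem x hx =>
      simp only [Set.mem_singleton_iff] at hx
      exact ⟨0, 1, by simp [hx]⟩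
  | algebraMap r => exact ⟨r, 0, by simp⟩
  | add x y hx hy ihx ihy =>
      obtain ⟨m1, n1, h1⟩ := ihx
      obtain ⟨m2, n2, h2⟩ := ihy
      exact ⟨m1 + m2, n1 + n2, by rw [h1, h2]; push_cast; ring⟩
  | mul x y hx hy ihx ihy =>
      obtain ⟨m1, n1, h1⟩ := ihx
      obtain ⟨m2, n2, h2⟩ := ihy
      refine ⟨m1 * m2 - n1 * n2, m1 * n2 + n1 * m2 - n1 * n2, ?_⟩
      rw [h1, h2]; push_cast
      linear_combination ((n1 : ℂ) * (n2 : ℂ)) * zeta3_rel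

open scoped Classical in
lemma period_eq (p : ℕ) [NeZero p] (hp : p.Prime) (χ : MulChar (ZMod p) ℂ) (hχ3 : χ ^ 3 = 1)
    (ψ : AddChar (ZMod p) ℂ) (hψ : ∀ x : ZMod p, ψ x = zetaC p ^ x.val) (j : ℕ) :
    (3 : ℂ) * gaussPeriodP p (fun x => χ x) j =
      -1 + zeta3 ^ (2 * j) * gaussSum χ ψ + zeta3 ^ j * gaussSum (χ ^ 2) ψ := by
  haveI : Fact p.Prime := ⟨hp⟩
  have hζ : IsPrimitiveRoot (zetaC p) p := by
    simpa [zetaC] using Complex.isPrimitiveRoot_exp p (NeZero.ne p)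
  have h3j : zeta3 ^ (3 * j) = 1 := by rw [pow_mul, zeta3_cube, one_pow]
  have hχ0 : χ (0 : ZMod p) = 0 := χ.map_nonunit (by simpa using not_isUnit_zero)
  have hχ20 : (χ ^ 2) (0 : ZMod p) = 0 := (χ ^ 2).map_nonunit (by simpa using not_isUnit_zero)
  have ht3 : ∀ x : ZMod p, x ≠ 0 → (χ x) ^ 3 = 1 := by
    intro x hx
    have hu : IsUnit x := isUnit_iff_ne_zero.mpr hx
    rw [← MulChar.pow_apply' χ (by norm_num : (3 : ℕ) ≠ 0) x, hχ3, MulChar.one_apply hu]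
  have hsum0 : ∑ x : ZMod p, zetaC p ^ x.val = 0 := by
    rw [← hζ.geom_sum_eq_zero hp.one_lt]
    refine Finset.sum_nbij' (fun x => x.val) (fun i => (i : ZMod p)) ?_ ?_ ?_ ?_ ?_
    · intro a _; exact Finset.mem_range.mpr (ZMod.val_lt a)
    · intro a _; exact Finset.mem_univ _
    · intro a _; exact ZMod.natCast_rightInverse a
    · intro a ha; exact ZMod.val_cast_of_lt (Finset.mem_range.mp ha)
    · intro a _; rfl
  have main : ∑ x ∈ Finset.univ.erase (0 : ZMod p),
      (1 + zeta3 ^ (2 * j) * χ x + zeta3 ^ j * (χ x) ^ 2) * zetaC p ^ x.val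
      = -1 + zeta3 ^ (2 * j) * gaussSum χ ψ + zeta3 ^ j * gaussSum (χ ^ 2) ψ := by
    have h1 : ∑ x ∈ Finset.univ.erase (0 : ZMod p), zetaC p ^ x.val = -1 := by
      have h := Finset.add_sum_erase Finset.univ (fun x : ZMod p => zetaC p ^ x.val)
        (Finset.mem_univ (0 : ZMod p))
      rw [hsum0] at h
      simp only [ZMod.val_zero, pow_zero] at h
      linear_combination h
    have h2 : ∑ x ∈ Finset.univ.erase (0 : ZMod p), χ x * zetaC p ^ x.val = gaussSum χ ψ := by
      rw [gaussSum, Finset.sum_erase _ (by simp [hχ0, hχ20])]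
      exact Finset.sum_congr rfl fun x _ => by rw [hψ]
    have h3 : ∑ x ∈ Finset.univ.erase (0 : ZMod p), (χ x) ^ 2 * zetaC p ^ x.val
        = gaussSum (χ ^ 2) ψ := by
      rw [gaussSum, Finset.sum_erase _ (by simp [hχ20, hχ0])]
      refine Finset.sum_congr rfl fun x _ => ?_
      rw [hψ, MulChar.pow_apply' χ (by norm_num : (2 : ℕ) ≠ 0) x]
    calc ∑ x ∈ Finset.univ.erase (0 : ZMod p),
          (1 + zeta3 ^ (2 * j) * χ x + zeta3 ^ j * (χ x) ^ 2) * zetaC p ^ x.val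
        = (∑ x ∈ Finset.univ.erase (0 : ZMod p), zetaC p ^ x.val)
          + zeta3 ^ (2 * j) * (∑ x ∈ Finset.univ.erase (0 : ZMod p), χ x * zetaC p ^ x.val)
          + zeta3 ^ j * (∑ x ∈ Finset.univ.erase (0 : ZMod p), (χ x) ^ 2 * zetaC p ^ x.val) := by
          rw [Finset.mul_sum, Finset.mul_sum, ← Finset.sum_add_distrib, ← Finset.sum_add_distrib]
          exact Finset.sum_congr rfl fun x _ => by ring
      _ = -1 + zeta3 ^ (2 * j) * gaussSum χ ψ + zeta3 ^ j * gaussSum (χ ^ 2) ψ := by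
          rw [h1, h2, h3]
  have split : (3 : ℂ) * gaussPeriodP p (fun x => χ x) j
      = ∑ x ∈ Finset.univ.erase (0 : ZMod p),
        (1 + zeta3 ^ (2 * j) * χ x + zeta3 ^ j * (χ x) ^ 2) * zetaC p ^ x.val := by
    rw [gaussPeriodP, Finset.mul_sum]
    rw [← Finset.sum_filter_add_sum_filter_not (Finset.univ.erase (0 : ZMod p))
      (fun x => χ x = zeta3 ^ j)
      (fun x => (1 + zeta3 ^ (2 * j) * χ x + zeta3 ^ j * (χ x) ^ 2) * zetaC p ^ x.val)]
    have hzero : ∑ x ∈ (Finset.univ.erase (0 : ZMod p)).filter (fun x => ¬ χ x = zeta3 ^ j),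
        (1 + zeta3 ^ (2 * j) * χ x + zeta3 ^ j * (χ x) ^ 2) * zetaC p ^ x.val = 0 := by
      refine Finset.sum_eq_zero fun x hx => ?_
      obtain ⟨hxe, hxne⟩ := Finset.mem_filter.mp hx
      have hx0 : x ≠ 0 := Finset.ne_of_mem_erase hxe
      have ht : (χ x) ^ 3 = 1 := ht3 x hx0
      have hsne : zeta3 ^ (2 * j) * χ x ≠ 1 := by
        intro h
        apply hxne
        have heq : zeta3 ^ j * (zeta3 ^ (2 * j) * χ x) = zeta3 ^ j := by rw [h, mul_one]
        rw [← mul_assoc, ← pow_add, show j + 2 * j = 3 * j by ring, h3j, one_mul] at heq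
        exact heq
      have hfac : (zeta3 ^ (2 * j) * χ x - 1)
          * (1 + zeta3 ^ (2 * j) * χ x + (zeta3 ^ (2 * j) * χ x) ^ 2) = 0 := by
        linear_combination (zeta3 ^ (2 * j)) ^ 3 * ht + (zeta3 ^ (3 * j) + 1) * h3j
      have hsum : 1 + zeta3 ^ (2 * j) * χ x + (zeta3 ^ (2 * j) * χ x) ^ 2 = 0 := by
        rcases mul_eq_zero.mp hfac with h | h
        · exact absurd (by linear_combination h) hsne
        · exact h
      have hc : 1 + zeta3 ^ (2 * j) * χ x + zeta3 ^ j * (χ x) ^ 2 = 0 := by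
        linear_combination hsum - (χ x) ^ 2 * zeta3 ^ j * h3j
      rw [hc, zero_mul]
    rw [hzero, add_zero]
    have hset : (Finset.univ.erase (0 : ZMod p)).filter (fun x => χ x = zeta3 ^ j)
        = Finset.univ.filter (fun x : ZMod p => x ≠ 0 ∧ χ x = zeta3 ^ j) := by
      rw [← Finset.filter_ne' Finset.univ (0 : ZMod p), Finset.filter_filter]
    rw [hset]
    refine Finset.sum_congr rfl fun x hx => ?_
    have hx2 : χ x = zeta3 ^ j := ((Finset.mem_filter.mp hx).2).2
    rw [hx2]
    linear_combination (-2 * zetaC p ^ x.val) * h3j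
  rw [split, main]

theorem stmt12 (p : ℕ) [NeZero p] (hp : p.Prime) (hp6 : p % 6 = 1)
    (χ : MulChar (ZMod p) ℂ) (hord : orderOf χ = 3) :
    ∃ u v a b c : ℤ,
      4 * (p : ℤ) = u ^ 2 + 27 * v ^ 2 ∧ u % 3 = 1 ∧
      18 * a = 2 * (p : ℤ) - u + 9 * v - 4 ∧
      18 * b = 2 * (p : ℤ) - u - 9 * v - 4 ∧
      9 * c = (p : ℤ) + 1 + u ∧
      gaussPeriodP p (fun x => χ x) 0 * gaussPeriodP p (fun x => χ x) 1 =
        (a : ℂ) * gaussPeriodP p (fun x => χ x) 0 + (b : ℂ) * gaussPeriodP p (fun x => χ x) 1 +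
          (c : ℂ) * gaussPeriodP p (fun x => χ x) 2 ∧
      gaussPeriodP p (fun x => χ x) 1 * gaussPeriodP p (fun x => χ x) 2 =
        (a : ℂ) * gaussPeriodP p (fun x => χ x) 1 + (b : ℂ) * gaussPeriodP p (fun x => χ x) 2 +
          (c : ℂ) * gaussPeriodP p (fun x => χ x) 0 ∧
      gaussPeriodP p (fun x => χ x) 2 * gaussPeriodP p (fun x => χ x) 0 =
        (a : ℂ) * gaussPeriodP p (fun x => χ x) 2 + (b : ℂ) * gaussPeriodP p (fun x => χ x) 0 +
          (c : ℂ) * gaussPeriodP p (fun x => χ x) 1 := by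
  haveI : Fact p.Prime := ⟨hp⟩
  have hp1 : 1 < p := hp.one_lt
  have hζ : IsPrimitiveRoot (zetaC p) p := by
    simpa [zetaC] using Complex.isPrimitiveRoot_exp p (NeZero.ne p)
  have hζ1 : zetaC p ^ p = 1 := hζ.pow_eq_one
  set ψ : AddChar (ZMod p) ℂ := AddChar.zmodChar p hζ1 with hψdef
  have hψval : ∀ x : ZMod p, ψ x = zetaC p ^ x.val := fun x => AddChar.zmodChar_apply hζ1 x
  have hψprim : ψ.IsPrimitive := AddChar.zmodChar_primitive_of_primitive_root p hζ
  -- character facts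
  have hχ1 : χ ≠ 1 := by
    intro h
    rw [h, orderOf_one] at hord
    norm_num at hord
  have hχ3 : χ ^ 3 = 1 := by rw [← hord]; exact pow_orderOf_eq_one χ
  have hχ2ne : χ ^ 2 ≠ 1 := by
    intro h
    have := orderOf_dvd_of_pow_eq_one h
    rw [hord] at this
    norm_num at this
  have hχmul : χ * χ ≠ 1 := by rw [← sq]; exact hχ2ne
  have hχinv : χ⁻¹ = χ ^ 2 := by
    apply inv_eq_of_mul_eq_one_right
    rw [← pow_succ']; exact hχ3
  have hpow4 : χ ^ 2 * χ ^ 2 = χ := by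
    rw [← pow_add, show (2 + 2 : ℕ) = 3 + 1 from rfl, pow_add, hχ3, one_mul, pow_one]
  have hχ4ne : χ ^ 2 * χ ^ 2 ≠ 1 := by rw [hpow4]; exact hχ1
  have hcardC : (Fintype.card (ZMod p) : ℂ) ≠ 0 := by
    rw [ZMod.card]
    exact_mod_cast hp.ne_zero
  -- gauss sums and jacobi sums
  set w : ℂ := zeta3 with hwdef
  set g : ℂ := gaussSum χ ψ with hgdef
  set gb : ℂ := gaussSum (χ ^ 2) ψ with hgbdef
  set J : ℂ := jacobiSum χ χ with hJdef
  set K : ℂ := jacobiSum (χ ^ 2) (χ ^ 2) with hKdef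
  have hJg : gb * J = g * g := by
    have h := jacobiSum_mul_nontrivial hχmul ψ
    rw [show χ * χ = χ ^ 2 from (sq χ).symm] at h
    exact h
  have hKg : g * K = gb * gb := by
    have h := jacobiSum_mul_nontrivial hχ4ne ψ
    rw [hpow4] at h
    exact h
  have hJK : J * K = (p : ℂ) := by
    have hchar : ringChar ℂ ≠ ringChar (ZMod p) := by
      rw [ringChar.eq_zero, ZMod.ringChar_zmod_n]
      exact fun h => hp.ne_zero h.symm
    have h := jacobiSum_mul_jacobiSum_inv hchar hχ1 hχ1 hχmul
    rw [hχinv, ZMod.card] at h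
    exact h
  have hgne : g ≠ 0 := gaussSum_ne_zero_of_nontrivial hcardC hχ1 hψprim
  have hgbne : gb ≠ 0 := gaussSum_ne_zero_of_nontrivial hcardC hχ2ne hψprim
  have hggb : g * gb = (p : ℂ) := by
    have hsq : (g * gb) * (g * gb) = (p : ℂ) * (g * gb) := by
      calc (g * gb) * (g * gb) = (g * g) * (gb * gb) := by ring
        _ = (gb * J) * (g * K) := by rw [hJg, hKg]
        _ = (J * K) * (g * gb) := by ring
        _ = (p : ℂ) * (g * gb) := by rw [hJK]
    exact mul_right_cancel₀ (mul_ne_zero hgne hgbne) hsq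
  -- structure of the Jacobi sum
  obtain ⟨z, hzmem, hzeq⟩ := exists_jacobiSum_eq_neg_one_add (by norm_num : 2 < 3)
    hχ3 hχ3 (by rw [ZMod.card]; omega) zeta3_prim
  obtain ⟨zm, zn, hzrep⟩ := mem_adjoin_zeta3 hzmem
  obtain ⟨s, v, hz⟩ : ∃ s v : ℤ, z = ((s : ℂ) + 1 - (v : ℂ)) + ((s : ℂ) + 1) * w :=
    ⟨zn - 1, zn - zm, by rw [hzrep]; push_cast; ring⟩
  have hw3 : w ^ 3 = 1 := zeta3_cube
  have hwrel : w ^ 2 + w + 1 = 0 := zeta3_rel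
  have hconjw : (starRingEnd ℂ) w = w ^ 2 := conj_zeta3
  rw [← hwdef] at hzeq
  have hJ : J = (3 * (s : ℂ) + 2) + 3 * (v : ℂ) * w := by
    rw [hJdef, hzeq, hz]
    linear_combination (-(s : ℂ) - 1 - (v : ℂ)) * hwrel + ((s : ℂ) + 1) * hw3
  -- conjugation
  have hconj : ∀ y : ZMod p, (starRingEnd ℂ) (χ y) = (χ ^ 2) y := by
    intro y
    rcases eq_or_ne y 0 with rfl | hy
    · rw [χ.map_nonunit (by simpa using not_isUnit_zero),
        (χ ^ 2).map_nonunit (by simpa using not_isUnit_zero), map_zero]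
    · have hu : IsUnit y := isUnit_iff_ne_zero.mpr hy
      have ht3 : (χ y) ^ 3 = 1 := by
        rw [← MulChar.pow_apply' χ (by norm_num : (3 : ℕ) ≠ 0) y, hχ3, MulChar.one_apply hu]
      rw [MulChar.pow_apply' χ (by norm_num : (2 : ℕ) ≠ 0) y]
      rcases cube_root_trichotomy ht3 with h | h | h <;> rw [h]
      · simp
      · rw [conj_zeta3]
      · rw [map_pow, conj_zeta3]
  have hKconj : K = (starRingEnd ℂ) J := by
    rw [hKdef, hJdef]
    simp only [jacobiSum, map_sum, map_mul]
    exact Finset.sum_congr rfl fun x _ => by rw [hconj x, hconj (1 - x)]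
  have hK : K = (3 * (s : ℂ) + 2 - 3 * (v : ℂ)) - 3 * (v : ℂ) * w := by
    rw [hKconj, hJ]
    simp only [map_add, map_mul, map_ofNat, map_intCast, hconjw]
    linear_combination 3 * (v : ℂ) * hwrel
  -- the complex quadratic relations
  have h1 : g ^ 2 = ((3 * (s : ℂ) + 2) + 3 * (v : ℂ) * w) * gb := by
    rw [← hJ]; linear_combination -hJg
  have h2 : gb ^ 2 = ((3 * (s : ℂ) + 2 - 3 * (v : ℂ)) - 3 * (v : ℂ) * w) * g := by
    rw [← hK]; linear_combination -hKg
  have hpC : (p : ℂ) = (3 * (s : ℂ) + 2) ^ 2 - (3 * (s : ℂ) + 2) * (3 * (v : ℂ))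
      + (3 * (v : ℂ)) ^ 2 := by
    rw [hJ, hK] at hJK
    linear_combination (-1 : ℂ) * hJK - (3 * (v : ℂ)) ^ 2 * hwrel
  have h3 : g * gb = (3 * (s : ℂ) + 2) ^ 2 - (3 * (s : ℂ) + 2) * (3 * (v : ℂ))
      + (3 * (v : ℂ)) ^ 2 := by rw [hggb, hpC]
  have h4 : w ^ 2 + w + 1 = 0 := zeta3_rel
  have hpZ : (p : ℤ) = (3 * s + 2) ^ 2 - (3 * s + 2) * (3 * v) + (3 * v) ^ 2 := by
    have : ((p : ℤ) : ℂ) = (((3 * s + 2) ^ 2 - (3 * s + 2) * (3 * v) + (3 * v) ^ 2 : ℤ) : ℂ) := by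
      push_cast
      rw [hpC]
    exact_mod_cast this
  -- the Gauss period relations
  have e0 := period_eq p hp χ hχ3 ψ hψval 0
  have e1 := period_eq p hp χ hχ3 ψ hψval 1
  have e2 := period_eq p hp χ hχ3 ψ hψval 2
  rw [show (2 * 0 : ℕ) = 0 from rfl] at e0
  simp only [pow_zero, one_mul] at e0
  rw [show (2 * 1 : ℕ) = 2 from rfl, pow_one] at e1
  rw [show (2 * 2 : ℕ) = 4 from rfl,
    show zeta3 ^ (4 : ℕ) = zeta3 from by
      rw [show (4 : ℕ) = 3 + 1 from rfl, pow_add, zeta3_cube, one_mul, pow_one]] at e2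
  simp only [← hwdef, ← hgdef, ← hgbdef] at e0 e1 e2
  set G0 : ℂ := gaussPeriodP p (fun x => χ x) 0 with hG0def
  set G1 : ℂ := gaussPeriodP p (fun x => χ x) 1 with hG1def
  set G2 : ℂ := gaussPeriodP p (fun x => χ x) 2 with hG2def
  refine ⟨6 * s + 4 - 3 * v, v, s ^ 2 + s - s * v + v ^ 2, s ^ 2 + s - s * v + v ^ 2 - v,
    (s + 1) ^ 2 - (s + 1) * v + v ^ 2, ?_, ?_, ?_, ?_, ?_, ?_, ?_, ?_⟩
  · rw [hpZ]; ring
  · omega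
  · linear_combination (-2 : ℤ) * hpZ
  · linear_combination (-2 : ℤ) * hpZ
  · linear_combination (-1 : ℤ) * hpZ
  · -- G0 * G1
    push_cast
    linear_combination
      ((G1 - ((s:ℂ)^2 + (s:ℂ) - (s:ℂ)*(v:ℂ) + (v:ℂ)^2)) / 3) * e0
      + (((-1 + g + gb) - 3 * ((s:ℂ)^2 + (s:ℂ) - (s:ℂ)*(v:ℂ) + (v:ℂ)^2 - (v:ℂ))) / 9) * e1
      + (-(((s:ℂ) + 1)^2 - ((s:ℂ) + 1)*(v:ℂ) + (v:ℂ)^2) / 3) * e2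
      + (w^2 / 9) * h1 + (w / 9) * h2 + ((w + w^2) / 9) * h3
      + (((4)*1 + (-6)*(v:ℂ) + (9)*(v:ℂ)^2 + (12)*(s:ℂ) + (-9)*(s:ℂ)*(v:ℂ) + (9)*(s:ℂ)^2
          + (-1)*gb + (-3)*gb*(v:ℂ)^2 + (-3)*gb*(s:ℂ) + (3)*gb*(s:ℂ)*(v:ℂ) + (-3)*gb*(s:ℂ)^2
          + (3)*gb*w*(v:ℂ) + (-1)*g + (-3)*g*(v:ℂ)^2 + (-3)*g*(s:ℂ) + (3)*g*(s:ℂ)*(v:ℂ)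
          + (-3)*g*(s:ℂ)^2) / 9) * h4
  · -- G1 * G2
    push_cast
    linear_combination
      ((G2 - ((s:ℂ)^2 + (s:ℂ) - (s:ℂ)*(v:ℂ) + (v:ℂ)^2)) / 3) * e1
      + (((-1 + w^2 * g + w * gb) - 3 * ((s:ℂ)^2 + (s:ℂ) - (s:ℂ)*(v:ℂ) + (v:ℂ)^2 - (v:ℂ))) / 9) * e2
      + (-(((s:ℂ) + 1)^2 - ((s:ℂ) + 1)*(v:ℂ) + (v:ℂ)^2) / 3) * e0
      + (w^3 / 9) * h1 + (w^3 / 9) * h2 + ((w^2 + w^4) / 9) * h3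
      + (((4)*1 + (-6)*(v:ℂ) + (9)*(v:ℂ)^2 + (12)*(s:ℂ) + (-9)*(s:ℂ)*(v:ℂ) + (9)*(s:ℂ)^2
          + (-4)*w + (6)*w*(v:ℂ) + (-9)*w*(v:ℂ)^2 + (-12)*w*(s:ℂ) + (9)*w*(s:ℂ)*(v:ℂ)
          + (-9)*w*(s:ℂ)^2 + (4)*w^2 + (-6)*w^2*(v:ℂ) + (9)*w^2*(v:ℂ)^2 + (12)*w^2*(s:ℂ)
          + (-9)*w^2*(s:ℂ)*(v:ℂ) + (9)*w^2*(s:ℂ)^2 + (-3)*gb + (3)*gb*(v:ℂ) + (-3)*gb*(v:ℂ)^2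
          + (-6)*gb*(s:ℂ) + (3)*gb*(s:ℂ)*(v:ℂ) + (-3)*gb*(s:ℂ)^2 + (2)*gb*w + (-3)*gb*w*(v:ℂ)
          + (3)*gb*w*(s:ℂ) + (3)*gb*w^2*(v:ℂ) + (-3)*g + (3)*g*(v:ℂ) + (-3)*g*(v:ℂ)^2
          + (-6)*g*(s:ℂ) + (3)*g*(s:ℂ)*(v:ℂ) + (-3)*g*(s:ℂ)^2 + (2)*g*w + (3)*g*w*(s:ℂ)
          + (-3)*g*w^2*(v:ℂ)) / 9) * h4
  · -- G2 * G0
    push_cast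
    linear_combination
      ((G0 - ((s:ℂ)^2 + (s:ℂ) - (s:ℂ)*(v:ℂ) + (v:ℂ)^2)) / 3) * e2
      + (((-1 + w * g + w^2 * gb) - 3 * ((s:ℂ)^2 + (s:ℂ) - (s:ℂ)*(v:ℂ) + (v:ℂ)^2 - (v:ℂ))) / 9) * e0
      + (-(((s:ℂ) + 1)^2 - ((s:ℂ) + 1)*(v:ℂ) + (v:ℂ)^2) / 3) * e1
      + (w / 9) * h1 + (w^2 / 9) * h2 + ((w + w^2) / 9) * h3
      + (((4)*1 + (-6)*(v:ℂ) + (9)*(v:ℂ)^2 + (12)*(s:ℂ) + (-9)*(s:ℂ)*(v:ℂ) + (9)*(s:ℂ)^2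
          + (-1)*gb + (3)*gb*(v:ℂ) + (-3)*gb*(v:ℂ)^2 + (-3)*gb*(s:ℂ) + (3)*gb*(s:ℂ)*(v:ℂ)
          + (-3)*gb*(s:ℂ)^2 + (-1)*g + (3)*g*(v:ℂ) + (-3)*g*(v:ℂ)^2 + (-3)*g*(s:ℂ)
          + (3)*g*(s:ℂ)*(v:ℂ) + (-3)*g*(s:ℂ)^2 + (-3)*g*w*(v:ℂ)) / 9) * h4
end

section
/- Let p ≡ 1 (mod 6) be a prime, let χ be a nontrivial cubic multiplicative character of F_p, let G_0, G_1, G_2 be the associated Gauss periods, and set η = G_0. Then there exist integers u, v with 4p = u² + 27v², u ≡ 1 (mod 3), and v ≠ 0, such that G_1 = η²/v + ((4 − u − 3v)/(6v)) η + (2 − u − 9v − 4p)/(18v) and G_2 = −η²/v − ((3v − u + 4)/(6v)) η − (9v − u − 4p + 2)/(18v); consequently the Gauss sum satisfies G_1(1,χ) = η + ζ_3 (η²/v + ((4 − u − 3v)/(6v)) η + (2 − u − 9v − 4p)/(18v)) + ζ_3² (−η²/v − ((3v − u + 4)/(6v)) η − (9v − u − 4p + 2)/(18v)). -/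
open Finset

theorem stmt13 (p : ℕ) [NeZero p] (hp : p.Prime) (hp6 : p % 6 = 1)
    (χ : MulChar (ZMod p) ℂ) (hord : orderOf χ = 3) :
    ∃ u v : ℤ, 4 * (p : ℤ) = u ^ 2 + 27 * v ^ 2 ∧ u % 3 = 1 ∧ v ≠ 0 ∧
      gaussPeriodP p (fun x => χ x) 1 =
        (gaussPeriodP p (fun x => χ x) 0) ^ 2 / (v : ℂ) +
          ((4 - (u : ℂ) - 3 * (v : ℂ)) / (6 * (v : ℂ))) * gaussPeriodP p (fun x => χ x) 0 +
          (2 - (u : ℂ) - 9 * (v : ℂ) - 4 * (p : ℂ)) / (18 * (v : ℂ)) ∧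
      gaussPeriodP p (fun x => χ x) 2 =
        -((gaussPeriodP p (fun x => χ x) 0) ^ 2 / (v : ℂ)) -
          ((3 * (v : ℂ) - (u : ℂ) + 4) / (6 * (v : ℂ))) * gaussPeriodP p (fun x => χ x) 0 -
          (9 * (v : ℂ) - (u : ℂ) - 4 * (p : ℂ) + 2) / (18 * (v : ℂ)) ∧
      gaussSumP p (fun y => χ y) =
        gaussPeriodP p (fun x => χ x) 0 +
          zeta3 * ((gaussPeriodP p (fun x => χ x) 0) ^ 2 / (v : ℂ) +
            ((4 - (u : ℂ) - 3 * (v : ℂ)) / (6 * (v : ℂ))) * gaussPeriodP p (fun x => χ x) 0 +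
            (2 - (u : ℂ) - 9 * (v : ℂ) - 4 * (p : ℂ)) / (18 * (v : ℂ))) +
          zeta3 ^ 2 * (-((gaussPeriodP p (fun x => χ x) 0) ^ 2 / (v : ℂ)) -
            ((3 * (v : ℂ) - (u : ℂ) + 4) / (6 * (v : ℂ))) * gaussPeriodP p (fun x => χ x) 0 -
            (9 * (v : ℂ) - (u : ℂ) - 4 * (p : ℂ) + 2) / (18 * (v : ℂ))) := by
  haveI : Fact p.Prime := ⟨hp⟩
  have hp1 : 1 < p := hp.one_lt
  have hζprim : IsPrimitiveRoot (zetaC p) p := by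
    have := Complex.isPrimitiveRoot_exp p (NeZero.ne p)
    simpa [zetaC] using this
  have hωprim : IsPrimitiveRoot zeta3 3 := by
    have := Complex.isPrimitiveRoot_exp 3 (by norm_num)
    simpa [zeta3] using this
  set ω := zeta3 with hωdef
  set ζ := zetaC p with hζdef
  have hω3 : ω ^ 3 = 1 := hωprim.pow_eq_one
  have hωne1 : ω ≠ 1 := hωprim.ne_one (by norm_num)
  have hωs : ω ^ 2 + ω + 1 = 0 := by
    have h0 : (ω - 1) * (ω ^ 2 + ω + 1) = 0 := by linear_combination hω3
    rcases mul_eq_zero.mp h0 with h | h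
    · exact absurd (sub_eq_zero.mp h) hωne1
    · exact h
  have hζp : ζ ^ p = 1 := hζprim.pow_eq_one
  set e : AddChar (ZMod p) ℂ := AddChar.zmodChar p hζp with hedef
  have heprim : e.IsPrimitive := AddChar.zmodChar_primitive_of_primitive_root p hζprim
  have happ : ∀ x : ZMod p, e x = ζ ^ x.val := fun x => AddChar.zmodChar_apply hζp x
  -- character facts
  have hχ1 : χ ≠ 1 := by intro h; rw [h, orderOf_one] at hord; norm_num at hord
  have hχ3 : χ ^ 3 = 1 := by rw [← hord]; exact pow_orderOf_eq_one χ
  have hχ2 : χ ^ 2 ≠ 1 := by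
    intro h
    have := orderOf_dvd_of_pow_eq_one h
    rw [hord] at this
    norm_num at this
  have hχmul : χ * χ = χ ^ 2 := (sq χ).symm
  have hχ4 : χ ^ 2 * χ ^ 2 = χ := by
    rw [← pow_add]
    norm_num [pow_succ, hχ3]
  have hcube : ∀ z : ℂ, z ^ 3 = 1 → (starRingEnd ℂ) z = z ^ 2 := by
    intro z hz
    have habs : ‖z‖ = 1 := by
      have h3 : ‖z‖ ^ 3 = 1 := by rw [← norm_pow, hz, norm_one]
      nlinarith [norm_nonneg z, sq_nonneg (‖z‖ - 1), sq_nonneg (‖z‖ + 1)]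
    have hinv : z⁻¹ = (starRingEnd ℂ) z := Complex.inv_eq_conj habs
    rw [← hinv]
    have hzne : z ≠ 0 := by intro h; rw [h] at hz; norm_num at hz
    exact inv_eq_of_mul_eq_one_right (by linear_combination hz)
  have hval3 : ∀ x : ZMod p, x ≠ 0 → (χ x) ^ 3 = 1 := by
    intro x hx
    have hu : IsUnit x := isUnit_iff_ne_zero.mpr hx
    rw [← MulChar.pow_apply' χ (by norm_num) x, hχ3, MulChar.one_apply hu]
  have hχneg : χ (-1) = 1 := by
    have h2 : χ (-1) * χ (-1) = 1 := by
      rw [← map_mul]; norm_num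
    have h3 : χ (-1) ^ 3 = 1 := hval3 (-1) (by
      intro h
      have : (1 : ZMod p) = 0 := by rw [← neg_neg (1 : ZMod p), h, neg_zero]
      exact one_ne_zero this)
    calc χ (-1) = χ (-1) * (χ (-1) * χ (-1)) := by rw [h2, mul_one]
    _ = χ (-1) ^ 3 := by ring
    _ = 1 := h3
  -- Gauss sums
  set g₁ := gaussSum χ e with hg1def
  set g₂ := gaussSum (χ ^ 2) e with hg2def
  have hcard : (Fintype.card (ZMod p)) = p := ZMod.card p
  have h12 : g₁ * g₂ = (p : ℂ) := by
    have h := gaussSum_mul_gaussSum_pow_orderOf_sub_one hχ1 heprim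
    rw [hord, hχneg, hcard, one_mul] at h
    norm_num at h
    exact h
  have hs1 : g₂ * jacobiSum χ χ = g₁ * g₁ := by
    have h := jacobiSum_mul_nontrivial (χ := χ) (φ := χ) (by rwa [hχmul]) e
    rwa [hχmul] at h
  have hs2 : g₁ * jacobiSum (χ ^ 2) (χ ^ 2) = g₂ * g₂ := by
    have h := jacobiSum_mul_nontrivial (χ := χ ^ 2) (φ := χ ^ 2) (by rwa [hχ4]) e
    rwa [hχ4] at h
  have hcomp : χ.ringHomComp (starRingEnd ℂ) = χ ^ 2 := by
    apply MulChar.ext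
    intro a
    have h3 : (χ (a : ZMod p)) ^ 3 = 1 := hval3 _ a.ne_zero
    rw [MulChar.ringHomComp_apply, MulChar.pow_apply' χ (by norm_num), hcube _ h3]
  have hconj : jacobiSum (χ ^ 2) (χ ^ 2) = (starRingEnd ℂ) (jacobiSum χ χ) := by
    rw [← jacobiSum_ringHomComp, hcomp]
  -- Jacobi sum decomposition
  have hdvd : 3 ∣ Fintype.card (ZMod p) - 1 := by rw [hcard]; omega
  obtain ⟨z, hz, hJz⟩ := exists_jacobiSum_eq_neg_one_add (by norm_num : (2:ℕ) < 3) hχ3 hχ3 hdvd hωprim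
  have hzrep : ∀ w ∈ Algebra.adjoin ℤ {ω}, ∃ c d : ℤ, w = (c : ℂ) + (d : ℂ) * ω := by
    intro w hw
    induction hw using Algebra.adjoin_induction with
    | mem x hx => exact ⟨0, 1, by simp at hx; simp [hx]⟩
    | algebraMap r => exact ⟨r, 0, by simp⟩
    | add x y hx hy ihx ihy =>
      obtain ⟨c1, d1, h1⟩ := ihx
      obtain ⟨c2, d2, h2⟩ := ihy
      exact ⟨c1 + c2, d1 + d2, by rw [h1, h2]; push_cast; ring⟩
    | mul x y hx hy ihx ihy =>
      obtain ⟨c1, d1, h1⟩ := ihx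
      obtain ⟨c2, d2, h2⟩ := ihy
      refine ⟨c1 * c2 - d1 * d2, c1 * d2 + c2 * d1 - d1 * d2, ?_⟩
      rw [h1, h2]
      push_cast
      linear_combination ((d1 : ℂ) * d2) * hωs
  obtain ⟨c, d, hzc⟩ := hzrep z hz
  set a : ℤ := 3 * d - 1 with hadef
  set b : ℤ := 3 * (d - c) with hbdef
  have hJ : jacobiSum χ χ = (a : ℂ) + (b : ℂ) * ω := by
    rw [hJz, hzc, hadef, hbdef]
    push_cast
    linear_combination ((c : ℂ) + (d : ℂ) * (ω - 3)) * hωs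
  have hconjω : (starRingEnd ℂ) ω = ω ^ 2 := hcube ω hω3
  have hJ2 : jacobiSum (χ ^ 2) (χ ^ 2) = (a : ℂ) + (b : ℂ) * ω ^ 2 := by
    rw [hconj, hJ, map_add, map_mul, hconjω, map_intCast, map_intCast]
  have hs1' : g₂ * ((a : ℂ) + (b : ℂ) * ω) = g₁ * g₁ := by rw [← hJ]; exact hs1
  have hs2' : g₁ * ((a : ℂ) + (b : ℂ) * ω ^ 2) = g₂ * g₂ := by rw [← hJ2]; exact hs2
  have hpne : (p : ℂ) ≠ 0 := by
    simp only [ne_eq, Nat.cast_eq_zero]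
    exact hp.ne_zero
  have hJJ : ((a : ℂ) + (b : ℂ) * ω) * ((a : ℂ) + (b : ℂ) * ω ^ 2) = (p : ℂ) := by
    apply mul_left_cancel₀ hpne
    calc (p : ℂ) * (((a : ℂ) + (b : ℂ) * ω) * ((a : ℂ) + (b : ℂ) * ω ^ 2))
        = (g₂ * ((a : ℂ) + (b : ℂ) * ω)) * (g₁ * ((a : ℂ) + (b : ℂ) * ω ^ 2)) := by
          rw [← h12]; ring
      _ = (g₁ * g₁) * (g₂ * g₂) := by rw [hs1', hs2']
      _ = (g₁ * g₂) * (g₁ * g₂) := by ring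
      _ = (p : ℂ) * (p : ℂ) := by rw [h12]
  have hpint : a ^ 2 - a * b + b ^ 2 = (p : ℤ) := by
    have hC : ((a ^ 2 - a * b + b ^ 2 : ℤ) : ℂ) = ((p : ℤ) : ℂ) := by
      push_cast
      linear_combination hJJ - (a : ℂ) * (b : ℂ) * hωs - (b : ℂ) ^ 2 * hω3
    exact_mod_cast hC
  -- the integers u and v
  set u : ℤ := 2 * a - b with hudef
  set v : ℤ := d - c with hvdef
  have hbv : b = 3 * v := hbdef
  have h4p : 4 * (p : ℤ) = u ^ 2 + 27 * v ^ 2 := by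
    rw [hudef]
    linear_combination (-4 : ℤ) * hpint + 3 * (b + 3 * v) * hbv
  have hu3 : u % 3 = 1 := by omega
  have hvne : v ≠ 0 := by
    intro hv0
    have hb0 : b = 0 := by rw [hbv, hv0, mul_zero]
    have hpa : (p : ℤ) = a ^ 2 := by rw [← hpint, hb0]; ring
    have hpp : Prime (p : ℤ) := Nat.prime_iff_prime_int.mp hp
    have hdvd2 : (p : ℤ) ∣ a ^ 2 := ⟨1, by rw [hpa]; ring⟩
    have hpda : (p : ℤ) ∣ a := hpp.dvd_of_dvd_pow hdvd2
    obtain ⟨k, hk⟩ := hpda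
    have : (1 : ℤ) = (p : ℤ) * k ^ 2 := by
      have hp0 : (p : ℤ) ≠ 0 := by exact_mod_cast hp.ne_zero
      have h2 : (p : ℤ) * 1 = (p : ℤ) * ((p : ℤ) * k ^ 2) := by
        rw [mul_one]
        calc (p : ℤ) = a ^ 2 := hpa
        _ = ((p : ℤ) * k) ^ 2 := by rw [← hk]
        _ = (p : ℤ) * ((p : ℤ) * k ^ 2) := by ring
      exact mul_left_cancel₀ hp0 h2
    have hdvd1 : (p : ℤ) ∣ 1 := ⟨k ^ 2, this⟩
    have hple : (p : ℤ) ≤ 1 := Int.le_of_dvd one_pos hdvd1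
    omega
  -- distinctness of cube roots
  have hωne0 : ω ≠ 0 := by
    intro h; rw [h] at hω3; norm_num at hω3
  have hω2ne1 : ω ^ 2 ≠ 1 := hωprim.pow_ne_one_of_pos_of_lt (by norm_num) (by norm_num)
  have hd01 : ω ^ 0 ≠ ω ^ 1 := by
    rw [pow_zero, pow_one]; exact fun h => hωne1 h.symm
  have hd02 : ω ^ 0 ≠ ω ^ 2 := by
    rw [pow_zero]; exact fun h => hω2ne1 h.symm
  have hd12 : ω ^ 1 ≠ ω ^ 2 := by
    rw [pow_one]
    intro h
    have : ω * (ω - 1) = 0 := by linear_combination -h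
    rcases mul_eq_zero.mp this with h' | h'
    · exact hωne0 h'
    · exact hωne1 (sub_eq_zero.mp h')
  -- each nonzero value of χ is a cube root of unity
  have hvals : ∀ x : ZMod p, x ≠ 0 → χ x = ω ^ 0 ∨ χ x = ω ^ 1 ∨ χ x = ω ^ 2 := by
    intro x hx
    have h3 := hval3 x hx
    have hfac : (χ x - 1) * ((χ x - ω) * (χ x - ω ^ 2)) = 0 := by
      linear_combination h3 + (χ x - (χ x) ^ 2) * hωs + (χ x - 1) * hω3
    rcases mul_eq_zero.mp hfac with h | h
    · exact Or.inl (by rw [pow_zero]; exact sub_eq_zero.mp h)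
    · rcases mul_eq_zero.mp h with h' | h'
      · exact Or.inr (Or.inl (by rw [pow_one]; exact sub_eq_zero.mp h'))
      · exact Or.inr (Or.inr (sub_eq_zero.mp h'))
  classical
  -- the Gauss periods
  have hGsum : ∀ j : ℕ, gaussPeriodP p (fun x => χ x) j
      = ∑ x ∈ univ.filter (fun x : ZMod p => x ≠ 0 ∧ χ x = ω ^ j), ζ ^ x.val := by
    intro j
    rw [gaussPeriodP]
  set G0 := gaussPeriodP p (fun x => χ x) 0 with hG0def
  set G1 := gaussPeriodP p (fun x => χ x) 1 with hG1def
  set G2 := gaussPeriodP p (fun x => χ x) 2 with hG2def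
  have hG0s : G0 = ∑ x ∈ univ.filter (fun x : ZMod p => x ≠ 0 ∧ χ x = ω ^ 0), ζ ^ x.val := by
    rw [hG0def]; exact hGsum 0
  have hG1s : G1 = ∑ x ∈ univ.filter (fun x : ZMod p => x ≠ 0 ∧ χ x = ω ^ 1), ζ ^ x.val := by
    rw [hG1def]; exact hGsum 1
  have hG2s : G2 = ∑ x ∈ univ.filter (fun x : ZMod p => x ≠ 0 ∧ χ x = ω ^ 2), ζ ^ x.val := by
    rw [hG2def]; exact hGsum 2
  -- splitting sums over nonzero elements
  have hsplit : ∀ f : ZMod p → ℂ,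
      ∑ x ∈ univ.filter (fun x : ZMod p => x ≠ 0), f x
        = (∑ x ∈ univ.filter (fun x : ZMod p => x ≠ 0 ∧ χ x = ω ^ 0), f x)
        + (∑ x ∈ univ.filter (fun x : ZMod p => x ≠ 0 ∧ χ x = ω ^ 1), f x)
        + (∑ x ∈ univ.filter (fun x : ZMod p => x ≠ 0 ∧ χ x = ω ^ 2), f x) := by
    intro f
    rw [Finset.sum_filter, Finset.sum_filter, Finset.sum_filter, Finset.sum_filter,
      ← Finset.sum_add_distrib, ← Finset.sum_add_distrib]
    refine Finset.sum_congr rfl fun x _ => ?_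
    by_cases hx : x = 0
    · simp [hx]
    · rcases hvals x hx with h | h | h
      · rw [if_pos hx, if_pos ⟨hx, h⟩, if_neg (fun hc => hd01 (h.symm.trans hc.2)),
          if_neg (fun hc => hd02 (h.symm.trans hc.2))]
        ring
      · rw [if_pos hx, if_neg (fun hc => hd01 (hc.2.symm.trans h)), if_pos ⟨hx, h⟩,
          if_neg (fun hc => hd12 (h.symm.trans hc.2))]
        ring
      · rw [if_pos hx, if_neg (fun hc => hd02 (hc.2.symm.trans h)),
          if_neg (fun hc => hd12 (hc.2.symm.trans h)), if_pos ⟨hx, h⟩]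
        ring
  -- splitting a full sum into the zero term and the rest
  have hsum_univ : ∀ f : ZMod p → ℂ,
      ∑ x : ZMod p, f x = f 0 + ∑ x ∈ univ.filter (fun x : ZMod p => x ≠ 0), f x := by
    intro f
    rw [← Finset.sum_filter_add_sum_filter_not univ (fun x : ZMod p => x = 0)]
    congr 1
    · rw [Finset.filter_eq']
      simp
  -- total sum of p-th roots of unity vanishes
  have hene0 : e ≠ 0 := by
    rw [show (0 : AddChar (ZMod p) ℂ) = 1 from rfl, AddChar.ne_one_iff]
    refine ⟨1, ?_⟩
    haveI : Fact (1 < p) := ⟨hp1⟩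
    rw [happ, ZMod.val_one]
    rw [pow_one]
    exact hζprim.ne_one hp1
  have hgeom : ∑ x : ZMod p, ζ ^ x.val = 0 := by
    have h := AddChar.sum_eq_zero_iff_ne_zero.mpr hene0
    rw [← h]
    exact Finset.sum_congr rfl fun x _ => (happ x).symm
  -- the three linear relations
  have hA : G0 + G1 + G2 = -1 := by
    have h0 := hsum_univ (fun x => ζ ^ x.val)
    rw [hgeom, hsplit (fun x => ζ ^ x.val)] at h0
    rw [hG0s, hG1s, hG2s]
    simp only [ZMod.val_zero, pow_zero] at h0 ⊢
    linear_combination -h0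
  have hχ0 : χ (0 : ZMod p) = 0 := by
    rw [MulChar.map_nonunit]
    haveI : Nontrivial (ZMod p) := ⟨⟨0, 1, fun h => one_ne_zero h.symm⟩⟩
    exact not_isUnit_zero
  have hbucket1 : ∀ j : ℕ,
      (∑ x ∈ univ.filter (fun x : ZMod p => x ≠ 0 ∧ χ x = ω ^ j), χ x * ζ ^ x.val)
        = ω ^ j * ∑ x ∈ univ.filter (fun x : ZMod p => x ≠ 0 ∧ χ x = ω ^ j), ζ ^ x.val := by
    intro j
    rw [Finset.mul_sum]
    refine Finset.sum_congr rfl fun x hx => ?_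
    rw [Finset.mem_filter] at hx
    rw [hx.2.2]
  have hbucket2 : ∀ j : ℕ,
      (∑ x ∈ univ.filter (fun x : ZMod p => x ≠ 0 ∧ χ x = ω ^ j), (χ ^ 2) x * ζ ^ x.val)
        = (ω ^ j) ^ 2 * ∑ x ∈ univ.filter (fun x : ZMod p => x ≠ 0 ∧ χ x = ω ^ j), ζ ^ x.val := by
    intro j
    rw [Finset.mul_sum]
    refine Finset.sum_congr rfl fun x hx => ?_
    rw [Finset.mem_filter] at hx
    rw [MulChar.pow_apply' χ (by norm_num) x, hx.2.2]
  have hB : g₁ = G0 + ω * G1 + ω ^ 2 * G2 := by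
    have h1 : g₁ = ∑ x : ZMod p, χ x * ζ ^ x.val :=
      Finset.sum_congr rfl fun x _ => by rw [happ]
    rw [hG0s, hG1s, hG2s, h1, hsum_univ (fun x => χ x * ζ ^ x.val),
      hsplit (fun x => χ x * ζ ^ x.val), hbucket1 0, hbucket1 1, hbucket1 2]
    simp only [hχ0, zero_mul, zero_add, pow_zero, pow_one, one_mul]
  have hC : g₂ = G0 + ω ^ 2 * G1 + ω ^ 4 * G2 := by
    have h1 : g₂ = ∑ x : ZMod p, (χ ^ 2) x * ζ ^ x.val :=
      Finset.sum_congr rfl fun x _ => by rw [happ]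
    have hχ20 : (χ ^ 2) (0 : ZMod p) = 0 := by
      rw [MulChar.pow_apply' χ (by norm_num), hχ0]
      norm_num
    rw [hG0s, hG1s, hG2s, h1, hsum_univ (fun x => (χ ^ 2) x * ζ ^ x.val),
      hsplit (fun x => (χ ^ 2) x * ζ ^ x.val), hbucket2 0, hbucket2 1, hbucket2 2]
    simp only [hχ20, zero_mul, zero_add, pow_zero, pow_one, one_mul, one_pow]
    ring
  -- explicit formulas for the periods
  have hG0e : G0 = (-1 + g₁ + g₂) / 3 := by
    have h3G0 : 3 * G0 = -1 + g₁ + g₂ := by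
      linear_combination hA - hB - hC - G1 * hωs - G2 * hωs - G2 * ω * hω3
    linear_combination h3G0 / 3
  have hG1e : G1 = (-1 + ω ^ 2 * g₁ + ω * g₂) / 3 := by
    have h3G1 : 3 * G1 = -1 + ω ^ 2 * g₁ + ω * g₂ := by
      linear_combination hA - ω ^ 2 * hB - ω * hC - G0 * hωs - 2 * G1 * hω3
        - G2 * hωs - G2 * (ω + ω ^ 2) * hω3
    linear_combination h3G1 / 3
  -- cast facts
  have hvC : (v : ℂ) ≠ 0 := Int.cast_ne_zero.mpr hvne
  have hucast : (u : ℂ) = 2 * (a : ℂ) - (b : ℂ) := by rw [hudef]; push_cast; ring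
  have hvcast : (v : ℂ) = (b : ℂ) / 3 := by rw [hbv]; push_cast; ring
  -- the key identity
  have goal1' : 18 * (v : ℂ) * G1 =
      18 * G0 ^ 2 + 3 * (4 - (u : ℂ) - 3 * (v : ℂ)) * G0
        + (2 - (u : ℂ) - 9 * (v : ℂ) - 4 * (p : ℂ)) := by
    rw [hG0e, hG1e, hucast, hvcast]
    linear_combination 2 * hs1' + 2 * hs2' - 4 * h12
  have h1 : G1 = G0 ^ 2 / (v : ℂ) + ((4 - (u : ℂ) - 3 * (v : ℂ)) / (6 * (v : ℂ))) * G0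
      + (2 - (u : ℂ) - 9 * (v : ℂ) - 4 * (p : ℂ)) / (18 * (v : ℂ)) := by
    have h18 : (18 : ℂ) * (v : ℂ) ≠ 0 := mul_ne_zero (by norm_num) hvC
    have hrhs : G0 ^ 2 / (v : ℂ) + ((4 - (u : ℂ) - 3 * (v : ℂ)) / (6 * (v : ℂ))) * G0
        + (2 - (u : ℂ) - 9 * (v : ℂ) - 4 * (p : ℂ)) / (18 * (v : ℂ))
        = (18 * G0 ^ 2 + 3 * (4 - (u : ℂ) - 3 * (v : ℂ)) * G0
            + (2 - (u : ℂ) - 9 * (v : ℂ) - 4 * (p : ℂ))) / (18 * (v : ℂ)) := by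
      field_simp
      ring
    rw [hrhs, eq_comm, div_eq_iff h18]
    linear_combination -goal1'
  have h2 : G2 = -(G0 ^ 2 / (v : ℂ)) - ((3 * (v : ℂ) - (u : ℂ) + 4) / (6 * (v : ℂ))) * G0
      - (9 * (v : ℂ) - (u : ℂ) - 4 * (p : ℂ) + 2) / (18 * (v : ℂ)) := by
    have hG2e : G2 = -1 - G0 - G1 := by linear_combination hA
    rw [hG2e, h1]
    field_simp
    ring
  have h3 : gaussSumP p (fun y => χ y) = g₁ := by
    rw [gaussSumP]
    exact Finset.sum_congr rfl fun x _ => by rw [← hζdef, ← happ]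
  refine ⟨u, v, h4p, hu3, hvne, h1, h2, ?_⟩
  rw [← h1, ← h2, h3, hB]
end

section
/- Let p ≡ 1 (mod 6) be a prime, let χ be a nontrivial cubic multiplicative character of F_p, and let G_0, G_1, G_2 be the associated Gauss periods. Then (G_0 − G_2)² − (G_0 − G_2)(G_1 − G_2) + (G_1 − G_2)² = p; that is, x = G_0 − G_2 and y = G_1 − G_2 give a representation of p by the binary quadratic form x² − xy + y² in the real algebraic numbers G_0 − G_2, G_1 − G_2. -/
open Finset

open scoped Classical in
lemma period_sum (p : ℕ) [NeZero p] (hp : p.Prime) (χ : MulChar (ZMod p) ℂ)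
    (hχ3 : χ ^ 3 = 1) (k : ℕ) (hk : k ≠ 0) :
    ∑ y : ZMod p, (χ y) ^ k * zetaC p ^ y.val =
      ∑ j ∈ Finset.range 3, zeta3 ^ (j * k) * gaussPeriodP p (fun x => χ x) j := by
  haveI := Fact.mk hp
  have hcube : ∀ y : ZMod p, y ≠ 0 → (χ y) ^ 3 = 1 := by
    intro y hy
    rw [← MulChar.pow_apply' χ (by norm_num) y, hχ3, MulChar.one_apply (isUnit_iff_ne_zero.mpr hy)]
  have h1 : ∑ y : ZMod p, (χ y) ^ k * zetaC p ^ y.val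
      = ∑ y ∈ Finset.univ.filter (fun y : ZMod p => y ≠ 0), (χ y) ^ k * zetaC p ^ y.val := by
    refine (Finset.sum_filter_of_ne ?_).symm
    intro y _ hne hy0
    apply hne
    rw [hy0, MulChar.map_zero, zero_pow hk, zero_mul]
  rw [h1]
  have h2 : ∀ y ∈ Finset.univ.filter (fun y : ZMod p => y ≠ 0),
      (χ y) ^ k * zetaC p ^ y.val =
      ∑ j ∈ Finset.range 3, (if χ y = zeta3 ^ j then zeta3 ^ (j * k) * zetaC p ^ y.val else 0) := by
    intro y hy
    rw [Finset.mem_filter] at hy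
    obtain ⟨j0, hj0lt, hj0⟩ := zeta3_prim.eq_pow_of_pow_eq_one (hcube y hy.2)
    rw [Finset.sum_eq_single_of_mem j0 (Finset.mem_range.mpr hj0lt)]
    · rw [if_pos hj0.symm, ← hj0, ← pow_mul]
    · intro j hj hne
      rw [if_neg]
      intro hcontra
      exact hne (zeta3_prim.pow_inj (Finset.mem_range.mp hj) hj0lt (hj0.trans hcontra).symm)
  rw [Finset.sum_congr rfl h2, Finset.sum_comm]
  refine Finset.sum_congr rfl fun j _ => ?_
  rw [Finset.sum_ite, Finset.sum_const_zero, add_zero, gaussPeriodP, Finset.mul_sum,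
    Finset.filter_filter]

theorem stmt14 (p : ℕ) [NeZero p] (hp : p.Prime) (hp6 : p % 6 = 1)
    (χ : MulChar (ZMod p) ℂ) (hord : orderOf χ = 3) :
    (gaussPeriodP p (fun x => χ x) 0 - gaussPeriodP p (fun x => χ x) 2) ^ 2 -
        (gaussPeriodP p (fun x => χ x) 0 - gaussPeriodP p (fun x => χ x) 2) *
          (gaussPeriodP p (fun x => χ x) 1 - gaussPeriodP p (fun x => χ x) 2) +
        (gaussPeriodP p (fun x => χ x) 1 - gaussPeriodP p (fun x => χ x) 2) ^ 2 = (p : ℂ) := by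
  classical
  haveI := Fact.mk hp
  have hχ3 : χ ^ 3 = 1 := hord ▸ pow_orderOf_eq_one χ
  have hχ1 : χ ≠ 1 := by
    intro h; rw [h, orderOf_one] at hord; norm_num at hord
  -- the additive character
  have hζp : IsPrimitiveRoot (zetaC p) p := Complex.isPrimitiveRoot_exp p (NeZero.ne p)
  set ψ : AddChar (ZMod p) ℂ := AddChar.zmodChar p hζp.pow_eq_one with hψdef
  have hψprim : ψ.IsPrimitive := AddChar.zmodChar_primitive_of_primitive_root p hζp
  -- χ(-1) = 1
  have hm1 : χ (-1) = 1 := by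
    have h2 : χ (-1) * χ (-1) = 1 := by
      rw [← map_mul]; norm_num
    have h3 : χ (-1) ^ 3 = 1 := by
      rw [← MulChar.pow_apply' χ (by norm_num), hχ3, MulChar.one_apply (by simp)]
    linear_combination h3 - (χ (-1)) * h2
  -- the product of Gauss sums
  have hprod : gaussSum χ ψ * gaussSum (χ ^ 2) ψ = (p : ℂ) := by
    have := gaussSum_mul_gaussSum_pow_orderOf_sub_one hχ1 hψprim
    rw [hord] at this
    simpa [hm1, ZMod.card] using this
  -- express the Gauss sums via periods
  have hg : ∀ k : ℕ, k ≠ 0 → gaussSum (χ ^ k) ψ =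
      ∑ j ∈ Finset.range 3, zeta3 ^ (j * k) * gaussPeriodP p (fun x => χ x) j := by
    intro k hk
    rw [← period_sum p hp χ hχ3 k hk]
    refine Finset.sum_congr rfl fun y _ => ?_
    rw [MulChar.pow_apply' χ hk y]
    rfl
  have hg1 := hg 1 one_ne_zero
  have hg2 := hg 2 two_ne_zero
  rw [pow_one] at hg1
  -- ζ3 relations
  have hω : 1 + zeta3 + zeta3 ^ 2 = 0 := by
    have h3 : zeta3 ^ 3 = 1 := zeta3_prim.pow_eq_one
    have hne : zeta3 ≠ 1 := zeta3_prim.ne_one (by norm_num)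
    have : (zeta3 - 1) * (1 + zeta3 + zeta3 ^ 2) = 0 := by linear_combination h3
    rcases mul_eq_zero.mp this with h | h
    · exact absurd (sub_eq_zero.mp h) hne
    · exact h
  have h3 : zeta3 ^ 3 = 1 := zeta3_prim.pow_eq_one
  rw [hg1, hg2] at hprod
  simp only [Finset.sum_range_succ, Finset.sum_range_zero, zero_add] at hprod
  set G0 := gaussPeriodP p (fun x => χ x) 0
  set G1 := gaussPeriodP p (fun x => χ x) 1
  set G2 := gaussPeriodP p (fun x => χ x) 2
  linear_combination hprod - (G0 * G1 + G0 * G2 + G1 * G2) * hω -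
    (G1 ^ 2 + G2 ^ 2 + G1 * G2 * zeta3) * h3 -
    (zeta3 * G0 * G2 + zeta3 ^ 2 * G1 * G2 + zeta3 ^ 3 * G2 ^ 2) * h3
end
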